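/- arXiv:2411.05241 — 2 statements merged into one kernel-verified Lean document; each statement's English description precedes it below -/
import Mathlib

section
/- The graph ω₁ # ℕ contains an ℵ₁-star of rays, and hence satisfies Halin's Degree Conjecture for its unique end of degree ℵ₁. -/
noncomputable def omega1 : Ordinal := (Cardinal.aleph 1).ord

/-- Vertices of the graph `ω₁ # ℕ`. -/
def Vtx : Type 1 := {o : Ordinal // o < omega1} × ℕ

/-- Adjacency generating `ω₁ # ℕ`, the ray inflation of the sparse tree-graph
on the ordinal `ω₁`: vertical edges `{(α,n),(α,n+1)}`, predecessor edges
`{(γ,n),(γ+1,n)}`, and ladder edges `{(b α n, n),(α,n)}` for limit `α` with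
ladder `b α`. -/
def omegaRel (b : Ordinal → ℕ → Ordinal) : Vtx → Vtx → Prop := fun p q =>
  (p.1 = q.1 ∧ q.2 = p.2 + 1) ∨
  (p.2 = q.2 ∧ (q.1 : Ordinal) = (p.1 : Ordinal) + 1) ∨
  (p.2 = q.2 ∧ Order.IsSuccLimit (q.1 : Ordinal) ∧ (p.1 : Ordinal) = b q.1 p.2)

/-- The graph `ω₁ # ℕ`. -/
def omegaGraph (b : Ordinal → ℕ → Ordinal) : SimpleGraph Vtx :=
  SimpleGraph.fromRel (omegaRel b)

/-- A ray in a graph: an injective one-way infinite path. -/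
def IsRay {V : Type*} (G : SimpleGraph V) (r : ℕ → V) : Prop :=
  Function.Injective r ∧ ∀ n, G.Adj (r n) (r (n + 1))

/-- A finite path of length `m` in a graph, given as a function on `ℕ`. -/
def IsFinPath {V : Type*} (G : SimpleGraph V) (m : ℕ) (q : ℕ → V) : Prop :=
  Set.InjOn q (Set.Iic m) ∧ ∀ k < m, G.Adj (q k) (q (k + 1))

/-- The vertex set of a finite path of length `m`. -/
def finPathSet {V : Type*} (m : ℕ) (q : ℕ → V) : Set V := q '' Set.Iic m

/-- Two rays are equivalent (lie in the same end) if no finite vertex set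
separates them: after deleting any finite set, a tail vertex of the first ray
can reach a tail vertex of the second in the remaining graph. -/
def RayEquiv {V : Type*} (G : SimpleGraph V) (r s : ℕ → V) : Prop :=
  ∀ S : Set V, S.Finite → ∃ (i j : ℕ) (hi : r i ∈ Sᶜ) (hj : s j ∈ Sᶜ),
    (G.induce Sᶜ).Reachable ⟨r i, hi⟩ ⟨s j, hj⟩

/-- `R` together with the leaf rays `leaf i` forms a star of rays: the rays are
pairwise disjoint, each leaf ray sends infinitely many disjoint paths to the
central ray `R`, and paths from distinct families meet only in `R`. -/
def IsStarOfRays {V : Type*} {ι : Type*} (G : SimpleGraph V) (R : ℕ → V)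
    (leaf : ι → ℕ → V) : Prop :=
  IsRay G R ∧ (∀ i, IsRay G (leaf i)) ∧
  (∀ i j, i ≠ j → Disjoint (Set.range (leaf i)) (Set.range (leaf j))) ∧
  (∀ i, Disjoint (Set.range (leaf i)) (Set.range R)) ∧
  ∃ (len : ι → ℕ → ℕ) (p : ι → ℕ → ℕ → V),
    (∀ i n, IsFinPath G (len i n) (p i n)) ∧
    (∀ i n, p i n 0 ∈ Set.range (leaf i)) ∧
    (∀ i n, p i n (len i n) ∈ Set.range R) ∧
    (∀ i m n, m ≠ n →
      Disjoint (finPathSet (len i m) (p i m)) (finPathSet (len i n) (p i n))) ∧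
    (∀ i j, i ≠ j → ∀ m n x, x ∈ finPathSet (len i m) (p i m) →
      x ∈ finPathSet (len j n) (p j n) → x ∈ Set.range R)

/-- The graph `G` contains a `κ`-star of rays. -/
def HasStarOfRays {V : Type*} (G : SimpleGraph V) (κ : Cardinal) : Prop :=
  ∃ (ι : Type) (R : ℕ → V) (leaf : ι → ℕ → V),
    Cardinal.mk ι = κ ∧ IsStarOfRays G R leaf

namespace StarAux

open Ordinal Set Cardinal

lemma zero_lt_omega1 : (0 : Ordinal) < omega1 := by
  rw [omega1, Cardinal.lt_ord]
  simpa using aleph_pos 1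

lemma card_lt_of_lt_omega1 {o : Ordinal} (h : o < omega1) : o.card ≤ ℵ₀ := by
  rw [omega1, Cardinal.lt_ord] at h
  rwa [← Cardinal.succ_aleph0, Order.lt_succ_iff] at h

lemma lt_omega1_of_card {o : Ordinal} (h : o.card ≤ ℵ₀) : o < omega1 := by
  rw [omega1, Cardinal.lt_ord, ← Cardinal.succ_aleph0, Order.lt_succ_iff]
  exact h

lemma omega1_isLimit : Order.IsSuccLimit omega1 := Cardinal.isSuccLimit_ord (aleph0_le_aleph 1)

lemma succ_lt_omega1 {o : Ordinal} (h : o < omega1) : o + 1 < omega1 := by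
  rw [Ordinal.add_one_eq_succ]
  exact omega1_isLimit.succ_lt h

lemma add_omega0_lt_omega1 {o : Ordinal} (h : o < omega1) : o + Ordinal.omega0 < omega1 := by
  apply lt_omega1_of_card
  rw [Ordinal.card_add]
  have h1 : o.card ≤ ℵ₀ := card_lt_of_lt_omega1 h
  simpa using add_le_aleph0.mpr ⟨h1, le_rfl⟩

lemma countable_Iio {β : Ordinal} (h : β < omega1) : (Set.Iio β).Countable := by
  rw [← Set.countable_coe_iff]
  rw [← Cardinal.mk_le_aleph0_iff, Ordinal.mk_Iio_ordinal]
  have := card_lt_of_lt_omega1 h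
  simpa [← Ordinal.lift_card, Cardinal.lift_le_aleph0] using this

lemma countable_Iic {β : Ordinal} (h : β < omega1) : (Set.Iic β).Countable := by
  have : Set.Iic β ⊆ Set.Iio (β + 1) := fun x hx => lt_of_le_of_lt hx (lt_add_one β)
  exact (countable_Iio (succ_lt_omega1 h)).mono this

/-- A countable set of ordinals below `ω₁` is bounded below `ω₁`. -/
lemma exists_omega1_bound (s : Set Ordinal) (hs : s.Countable)
    (h : ∀ o ∈ s, o < omega1) : ∃ B, B < omega1 ∧ ∀ o ∈ s, o ≤ B := by
  rcases s.eq_empty_or_nonempty with rfl | hne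
  · exact ⟨0, zero_lt_omega1, by simp⟩
  · obtain ⟨f, rfl⟩ := hs.exists_eq_range hne
    refine ⟨iSup f, ?_, ?_⟩
    · have := Ordinal.iSup_lt_omega_one (f := f) (fun n => by rw [← Cardinal.ord_aleph]; exact h _ ⟨n, rfl⟩)
      rwa [omega1, Cardinal.ord_aleph]
    · rintro o ⟨n, rfl⟩
      exact Ordinal.le_iSup f n

/-- Clubs in `ω₁`. -/
def Club (C : Set Ordinal) : Prop :=
  (∀ α, α < omega1 → Order.IsSuccLimit α → (∀ β, β < α → ∃ γ ∈ C, β < γ ∧ γ < α) → α ∈ C) ∧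
  (∀ α, α < omega1 → ∃ γ ∈ C, α < γ ∧ γ < omega1)

/-- Stationary sets in `ω₁`. -/
def Stat (S : Set Ordinal) : Prop := ∀ C, Club C → ∃ α, α ∈ S ∩ C

/-- Closure points: given `g`, there are arbitrarily large countable limit
ordinals closed under `g`. -/
lemma exists_closure_point (g : Ordinal → Ordinal) (hg : ∀ β, β < omega1 → g β < omega1)
    (α₀ : Ordinal) (hα₀ : α₀ < omega1) :
    ∃ α, α₀ < α ∧ α < omega1 ∧ Order.IsSuccLimit α ∧ ∀ β, β < α → g β < α := by
  classical
  -- monotone closure of g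
  have hbar : ∀ β, β < omega1 → ∃ B, B < omega1 ∧ ∀ x ≤ β, g x ≤ B := by
    intro β hβ
    obtain ⟨B, hB, hBb⟩ := exists_omega1_bound ((fun x => g x) '' Set.Iic β)
      ((countable_Iic hβ).image _)
      (by rintro o ⟨x, hx, rfl⟩; exact hg x (lt_of_le_of_lt hx hβ))
    exact ⟨B, hB, fun x hx => hBb _ ⟨x, hx, rfl⟩⟩
  set gbar : Ordinal → Ordinal := fun β =>
    if h : β < omega1 then Classical.choose (hbar β h) else 0 with hgbar
  have hgbar1 : ∀ β, β < omega1 → gbar β < omega1 := by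
    intro β h; rw [hgbar]; simp only [dif_pos h]
    exact (Classical.choose_spec (hbar β h)).1
  have hgbar2 : ∀ β, β < omega1 → ∀ x ≤ β, g x ≤ gbar β := by
    intro β h x hx; rw [hgbar]; simp only [dif_pos h]
    exact (Classical.choose_spec (hbar β h)).2 x hx
  -- iterate
  set F : ℕ → Ordinal := fun k => Nat.rec (α₀ + 1)
    (fun _ β => max (β + 1) (gbar β + 1)) k with hF
  have hFsucc : ∀ k, F (k + 1) = max (F k + 1) (gbar (F k) + 1) := fun k => rfl
  have hFlt : ∀ k, F k < omega1 := by
    intro k; induction k with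
    | zero => exact succ_lt_omega1 hα₀
    | succ k ih =>
      rw [hFsucc]
      exact max_lt (succ_lt_omega1 ih) (succ_lt_omega1 (hgbar1 _ ih))
  have hFmono : ∀ k, F k < F (k + 1) := by
    intro k; rw [hFsucc]
    exact lt_of_lt_of_le (lt_add_one _) (le_max_left _ _)
  have hFle : ∀ k, F k ≤ iSup F := fun k => Ordinal.le_iSup F k
  have hlt_iSup : ∀ x, x < iSup F → ∃ k, x < F k := by
    intro x hx
    by_contra hcon
    push_neg at hcon
    exact absurd (Ordinal.iSup_le hcon) (not_le.mpr hx)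
  refine ⟨iSup F, ?_, ?_, ?_, ?_⟩
  · exact lt_of_lt_of_le (lt_add_one α₀) (hFle 0)
  · have := Ordinal.iSup_lt_omega_one (f := F) (fun k => by rw [← Cardinal.ord_aleph]; exact hFlt k)
    rwa [omega1, Cardinal.ord_aleph]
  · rw [Ordinal.isSuccLimit_iff]; constructor
    · have h0 : (0 : Ordinal) < α₀ + 1 :=
        lt_of_le_of_lt (zero_le (a := α₀)) (lt_add_one α₀)
      exact (lt_of_lt_of_le h0 (hFle 0)).ne'
    · refine Order.isSuccPrelimit_of_succ_lt fun a ha => ?_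
      obtain ⟨k, hk⟩ := hlt_iSup a ha
      have : a + 1 ≤ F k := by
        rw [Ordinal.add_one_eq_succ]; exact Order.succ_le_of_lt hk
      calc Order.succ a = a + 1 := (Ordinal.add_one_eq_succ a).symm
        _ ≤ F k := this
        _ < F (k+1) := hFmono k
        _ ≤ iSup F := hFle (k+1)
  · intro β hβ
    obtain ⟨k, hk⟩ := hlt_iSup β hβ
    have h1 : g β ≤ gbar (F k) := hgbar2 _ (hFlt k) _ hk.le
    calc g β ≤ gbar (F k) := h1
      _ < gbar (F k) + 1 := lt_add_one _
      _ ≤ F (k + 1) := by rw [hFsucc]; exact le_max_right _ _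
      _ ≤ iSup F := hFle (k+1)


lemma Club.inter {C D : Set Ordinal} (hC : Club C) (hD : Club D) : Club (C ∩ D) := by
  classical
  constructor
  · intro α hα hlim hub
    refine ⟨hC.1 α hα hlim ?_, hD.1 α hα hlim ?_⟩
    · intro β hβ
      obtain ⟨γ, hγ, h1, h2⟩ := hub β hβ
      exact ⟨γ, hγ.1, h1, h2⟩
    · intro β hβ
      obtain ⟨γ, hγ, h1, h2⟩ := hub β hβ
      exact ⟨γ, hγ.2, h1, h2⟩
  · intro α₀ hα₀
    set g : Ordinal → Ordinal := fun β =>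
      if h : β < omega1 then
        max (Classical.choose (hC.2 β h)) (Classical.choose (hD.2 β h)) else 0 with hgdef
    have hg : ∀ β, β < omega1 → g β < omega1 := by
      intro β h
      rw [hgdef]; simp only [dif_pos h]
      exact max_lt (Classical.choose_spec (hC.2 β h)).2.2
        (Classical.choose_spec (hD.2 β h)).2.2
    obtain ⟨α, h1, h2, h3, h4⟩ := exists_closure_point g hg α₀ hα₀
    have hCb : ∀ β, β < α → ∃ γ ∈ C, β < γ ∧ γ < α := by
      intro β hβ
      have hβ1 : β < omega1 := lt_trans hβ h2
      obtain ⟨hmem, hlt, _⟩ := Classical.choose_spec (hC.2 β hβ1)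
      refine ⟨_, hmem, hlt, lt_of_le_of_lt ?_ (h4 β hβ)⟩
      rw [hgdef]; simp only [dif_pos hβ1]
      exact le_max_left _ _
    have hDb : ∀ β, β < α → ∃ γ ∈ D, β < γ ∧ γ < α := by
      intro β hβ
      have hβ1 : β < omega1 := lt_trans hβ h2
      obtain ⟨hmem, hlt, _⟩ := Classical.choose_spec (hD.2 β hβ1)
      refine ⟨_, hmem, hlt, lt_of_le_of_lt ?_ (h4 β hβ)⟩
      rw [hgdef]; simp only [dif_pos hβ1]
      exact le_max_right _ _
    exact ⟨α, ⟨hC.1 α h2 h3 hCb, hD.1 α h2 h3 hDb⟩, h1, h2⟩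

/-- The diagonal intersection of clubs is a club. -/
lemma club_diag (C : Ordinal → Set Ordinal) (hC : ∀ γ, γ < omega1 → Club (C γ)) :
    Club {α | α < omega1 ∧ ∀ γ, γ < α → α ∈ C γ} := by
  classical
  constructor
  · intro α hα hlim hub
    refine ⟨hα, ?_⟩
    intro γ hγ
    have hγ1 : γ < omega1 := lt_trans hγ hα
    refine (hC γ hγ1).1 α hα hlim ?_
    intro β hβ
    obtain ⟨δ, hδ, h1, h2⟩ := hub (max β γ) (max_lt hβ hγ)
    refine ⟨δ, hδ.2 γ (lt_of_le_of_lt (le_max_right β γ) h1), lt_of_le_of_lt (le_max_left β γ) h1, h2⟩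
  · intro α₀ hα₀
    -- pick for each γ < β a point of C γ above β, bound them
    have hpick : ∀ β, β < omega1 → ∃ B, B < omega1 ∧ β < B ∧
        ∀ γ, γ < β → ∃ δ ∈ C γ, β < δ ∧ δ ≤ B := by
      intro β hβ
      have hc : ∀ γ (h : γ < β), ∃ δ ∈ C γ, β < δ ∧ δ < omega1 :=
        fun γ h => (hC γ (lt_trans h hβ)).2 β hβ
      set pt : (γ : Ordinal) → γ < β → Ordinal := fun γ h => Classical.choose (hc γ h)
      obtain ⟨B, hB, hBb⟩ := exists_omega1_bound
        {o | ∃ γ, ∃ h : γ < β, o = pt γ h}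
        (by
          have : {o | ∃ γ, ∃ h : γ < β, o = pt γ h} ⊆
              (fun γ => if h : γ < β then pt γ h else 0) '' Set.Iio β := by
            rintro o ⟨γ, h, rfl⟩
            exact ⟨γ, h, by simp [h]⟩
          exact ((countable_Iio hβ).image _).mono this)
        (by rintro o ⟨γ, h, rfl⟩; exact (Classical.choose_spec (hc γ h)).2.2)
      refine ⟨max B (β + 1), max_lt hB (succ_lt_omega1 hβ), ?_, ?_⟩
      · exact lt_of_lt_of_le (lt_add_one β) (le_max_right _ _)
      · intro γ hγ
        obtain ⟨hmem, hlt, _⟩ := Classical.choose_spec (hc γ hγ)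
        exact ⟨pt γ hγ, hmem, hlt, le_trans (hBb _ ⟨γ, hγ, rfl⟩) (le_max_left _ _)⟩
    set g : Ordinal → Ordinal := fun β =>
      if h : β < omega1 then Classical.choose (hpick β h) else 0 with hgdef
    have hg : ∀ β, β < omega1 → g β < omega1 := by
      intro β h; rw [hgdef]; simp only [dif_pos h]
      exact (Classical.choose_spec (hpick β h)).1
    obtain ⟨α, h1, h2, h3, h4⟩ := exists_closure_point g hg α₀ hα₀
    refine ⟨α, ⟨h2, ?_⟩, h1, h2⟩
    intro γ hγ
    have hγ1 : γ < omega1 := lt_trans hγ h2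
    refine (hC γ hγ1).1 α h2 h3 ?_
    intro β hβ
    -- use β' := max β (γ+1) < α
    have hβ' : max β (γ + 1) < α := max_lt hβ (h3.succ_lt hγ)
    have hβ'1 : max β (γ + 1) < omega1 := lt_trans hβ' h2
    obtain ⟨_, _, hall⟩ := Classical.choose_spec (hpick _ hβ'1)
    obtain ⟨δ, hδC, hδ1, hδ2⟩ := hall γ (lt_of_lt_of_le (lt_add_one γ) (le_max_right _ _))
    refine ⟨δ, hδC, lt_of_le_of_lt (le_max_left _ _) hδ1, ?_⟩
    have : g (max β (γ + 1)) < α := h4 _ hβ'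
    apply lt_of_le_of_lt _ this
    rw [hgdef]; simp only [dif_pos hβ'1]
    exact hδ2

lemma Club.stat {S : Set Ordinal} (hS : Club S) : Stat S := by
  intro C hC
  obtain ⟨γ, hγ, _, _⟩ := (hS.inter hC).2 0 zero_lt_omega1
  exact ⟨γ, hγ⟩

lemma Stat.unbounded {S : Set Ordinal} (h : Stat S) (α : Ordinal) (hα : α < omega1) :
    ∃ β ∈ S, α < β ∧ β < omega1 := by
  have hclub : Club {γ | α < γ ∧ γ < omega1} := by
    constructor
    · intro β hβ hlim hub
      obtain ⟨γ, hγ, h1, h2⟩ := hub 0 hlim.pos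
      exact ⟨lt_trans hγ.1 h2, hβ⟩
    · intro β hβ
      refine ⟨max α β + 1, ⟨?_, ?_⟩, ?_, ?_⟩
      · exact lt_of_le_of_lt (le_max_left _ _) (lt_add_one _)
      · exact succ_lt_omega1 (max_lt hα hβ)
      · exact lt_of_le_of_lt (le_max_right _ _) (lt_add_one _)
      · exact succ_lt_omega1 (max_lt hα hβ)
  obtain ⟨β, hβS, hβ⟩ := h _ hclub
  exact ⟨β, hβS, hβ.1, hβ.2⟩

/-- Fodor's lemma for `ω₁`. -/
lemma fodor {S : Set Ordinal} (hS : Stat S) (f : Ordinal → Ordinal)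
    (hf : ∀ α ∈ S, f α < α) : ∃ γ, Stat {α | α ∈ S ∧ f α = γ} := by
  classical
  by_contra hcon
  push_neg at hcon
  have hcon' : ∀ γ, ∃ C, Club C ∧ ∀ α, α ∈ S → f α = γ → α ∉ C := by
    intro γ
    have := hcon γ
    rw [Stat] at this
    push_neg at this
    obtain ⟨C, hC, hCe⟩ := this
    refine ⟨C, hC, fun α h1 h2 hmem => hCe α ⟨⟨h1, h2⟩, hmem⟩⟩
  set D : Ordinal → Set Ordinal := fun γ => Classical.choose (hcon' γ) with hDdef
  have hD : ∀ γ, γ < omega1 → Club (D γ) := fun γ _ => (Classical.choose_spec (hcon' γ)).1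
  obtain ⟨α, hαS, hαΔ⟩ := hS _ (club_diag D hD)
  have hfα : f α < α := hf α hαS
  have : α ∈ D (f α) := hαΔ.2 (f α) hfα
  exact (Classical.choose_spec (hcon' (f α))).2 α hαS rfl this

/-- The set of countable limit ordinals. -/
def LimS : Set Ordinal := {α | α < omega1 ∧ Order.IsSuccLimit α}

lemma club_LimS : Club LimS := by
  constructor
  · intro α hα hlim _; exact ⟨hα, hlim⟩
  · intro α hα
    refine ⟨α + Ordinal.omega0, ⟨add_omega0_lt_omega1 hα, ?_⟩, ?_, add_omega0_lt_omega1 hα⟩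
    · exact Ordinal.isSuccLimit_add α Ordinal.isSuccLimit_omega0
    · exact lt_of_lt_of_le (lt_add_one α) (by
        have := Order.one_le_iff_pos.mpr Ordinal.omega0_pos
        calc α + 1 ≤ α + Ordinal.omega0 := by
              exact add_le_add_right this α
          _ ≤ α + Ordinal.omega0 := le_rfl)

lemma stat_LimS : Stat LimS := club_LimS.stat


section Chain

variable (b : Ordinal → ℕ → Ordinal)

/-- The Fodor chain: a decreasing sequence of stationary sets with pinned
ladder values. -/
noncomputable def combo (hlt : ∀ α : Ordinal, α < omega1 → Order.IsSuccLimit α → ∀ n, b α n < α) :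
    ℕ → {p : Set Ordinal × Ordinal // Stat p.1 ∧ p.1 ⊆ LimS}
  | 0 => ⟨(LimS, 0), stat_LimS, subset_rfl⟩
  | n+1 =>
    let prev := combo hlt n
    have hreg : ∀ α ∈ prev.1.1, b α n < α := fun α hα =>
      hlt α (prev.2.2 hα).1 (prev.2.2 hα).2 n
    have h := fodor prev.2.1 (fun α => b α n) hreg
    ⟨({α | α ∈ prev.1.1 ∧ b α n = Classical.choose h}, Classical.choose h),
      Classical.choose_spec h, fun α hα => prev.2.2 hα.1⟩

variable (hlt : ∀ α : Ordinal, α < omega1 → Order.IsSuccLimit α → ∀ n, b α n < α)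

/-- The stationary sets. -/
noncomputable def SSet (n : ℕ) : Set Ordinal := (combo b hlt n).1.1

/-- The pinned ladder values. -/
noncomputable def cval (n : ℕ) : Ordinal := (combo b hlt (n+1)).1.2

lemma SSet_succ (n : ℕ) : SSet b hlt (n+1) =
    {α | α ∈ SSet b hlt n ∧ b α n = cval b hlt n} := rfl

lemma SSet_stat (n : ℕ) : Stat (SSet b hlt n) := (combo b hlt n).2.1

lemma SSet_sub_LimS (n : ℕ) : SSet b hlt n ⊆ LimS := (combo b hlt n).2.2

lemma SSet_succ_sub (n : ℕ) : SSet b hlt (n+1) ⊆ SSet b hlt n := by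
  rw [SSet_succ]; exact fun α hα => hα.1

lemma SSet_sub {m n : ℕ} (h : m ≤ n) : SSet b hlt n ⊆ SSet b hlt m := by
  induction n with
  | zero => simp at h; subst h; exact subset_rfl
  | succ n ih =>
    rcases Nat.eq_or_lt_of_le h with rfl | h'
    · exact subset_rfl
    · exact subset_trans (SSet_succ_sub b hlt n) (ih (Nat.lt_succ_iff.mp h'))

lemma SSet_pin {n : ℕ} {α : Ordinal} (h : α ∈ SSet b hlt (n+1)) :
    b α n = cval b hlt n := by
  rw [SSet_succ] at h; exact h.2

lemma SSet_pin_lt {k n : ℕ} (hk : k < n) {α : Ordinal} (h : α ∈ SSet b hlt n) :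
    b α k = cval b hlt k :=
  SSet_pin b hlt (SSet_sub b hlt (Nat.succ_le_of_lt hk) h)

lemma SSet_nonempty (n : ℕ) : ∃ α, α ∈ SSet b hlt n ∧ α < omega1 ∧ Order.IsSuccLimit α := by
  obtain ⟨α, hα, _, hlt1⟩ := (SSet_stat b hlt n).unbounded 0 zero_lt_omega1
  exact ⟨α, hα, hlt1, (SSet_sub_LimS b hlt n hα).2⟩

lemma cval_lt_omega1 (n : ℕ) : cval b hlt n < omega1 := by
  obtain ⟨α, hα, hα1, hα2⟩ := SSet_nonempty b hlt (n+1)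
  have := SSet_pin b hlt hα
  rw [← this]
  exact lt_trans (hlt α hα1 hα2 n) hα1

lemma cval_mono (hmono : ∀ α : Ordinal, α < omega1 → Order.IsSuccLimit α → StrictMono (b α))
    (n : ℕ) : cval b hlt n < cval b hlt (n+1) := by
  obtain ⟨α, hα, hα1, hα2⟩ := SSet_nonempty b hlt (n+2)
  have h1 := SSet_pin b hlt (SSet_succ_sub b hlt (n+1) hα)
  have h2 := SSet_pin b hlt hα
  rw [← h1, ← h2]
  exact hmono α hα1 hα2 (Nat.lt_succ_self n)

lemma cval_lt_mem {n : ℕ} {α : Ordinal} (h : α ∈ SSet b hlt (n+1)) : cval b hlt n < α := by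
  rw [← SSet_pin b hlt h]
  exact hlt α (SSet_sub_LimS b hlt _ (SSet_succ_sub b hlt n h)).1
    (SSet_sub_LimS b hlt _ (SSet_succ_sub b hlt n h)).2 n

end Chain

section Graph

/-- Building a vertex. -/
def vx (o : Ordinal) (h : o < omega1) (n : ℕ) : Vtx := (⟨o, h⟩, n)

/-- Ordinal coordinate. -/
def co (x : Vtx) : Ordinal := x.1.1

/-- Level coordinate. -/
def lv (x : Vtx) : ℕ := x.2

@[simp] lemma co_vx {o h n} : co (vx o h n) = o := rfl
@[simp] lemma lv_vx {o h n} : lv (vx o h n) = n := rfl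

lemma vx_inj {o o' h h' n n'} (hco : o = o') (hlv : n = n') :
    vx o h n = vx o' h' n' := by subst hco; subst hlv; rfl

lemma vx_eq_iff {o o' h h' n n'} : vx o h n = vx o' h' n' ↔ o = o' ∧ n = n' := by
  constructor
  · intro h1
    have h2 := congrArg co h1
    have h3 := congrArg lv h1
    simpa using ⟨h2, h3⟩
  · rintro ⟨rfl, rfl⟩; rfl

lemma eq_vx (x : Vtx) : x = vx (co x) x.1.2 (lv x) := rfl

variable {b : Ordinal → ℕ → Ordinal}

lemma adj_vert {o : Ordinal} (h : o < omega1) (n : ℕ) :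
    (omegaGraph b).Adj (vx o h n) (vx o h (n+1)) := by
  rw [omegaGraph, SimpleGraph.fromRel_adj]
  constructor
  · rw [Ne, vx_eq_iff]; simp
  · left; left; exact ⟨rfl, rfl⟩

lemma adj_succ {o : Ordinal} (h : o < omega1) (h' : o + 1 < omega1) (n : ℕ) :
    (omegaGraph b).Adj (vx o h n) (vx (o+1) h' n) := by
  rw [omegaGraph, SimpleGraph.fromRel_adj]
  constructor
  · intro hc
    rw [vx_eq_iff] at hc
    exact (lt_add_one o).ne hc.1
  · left; right; left; exact ⟨rfl, rfl⟩

lemma adj_ladder {α : Ordinal} (hα : α < omega1) (hlim : Order.IsSuccLimit α) (n : ℕ)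
    (hb : b α n < omega1) (hne : b α n ≠ α) :
    (omegaGraph b).Adj (vx (b α n) hb n) (vx α hα n) := by
  rw [omegaGraph, SimpleGraph.fromRel_adj]
  constructor
  · rw [Ne, vx_eq_iff]; simp [hne]
  · left; right; right; exact ⟨rfl, hlim, rfl⟩

end Graph

section Paths

variable {b : Ordinal → ℕ → Ordinal}

/-- Appending finite paths. -/
def pappend (k : ℕ) (q q' : ℕ → Vtx) : ℕ → Vtx :=
  fun i => if i ≤ k then q i else q' (i - k)

lemma pappend_left {k} {q q' : ℕ → Vtx} {i : ℕ} (h : i ≤ k) :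
    pappend k q q' i = q i := by simp [pappend, h]

lemma pappend_right {k} {q q' : ℕ → Vtx} (hglue : q k = q' 0) (j : ℕ) :
    pappend k q q' (k + j) = q' j := by
  rcases Nat.eq_zero_or_pos j with rfl | hj
  · simpa [pappend] using hglue
  · have : ¬ (k + j ≤ k) := by omega
    simp [pappend, this]

lemma isFinPath_pappend {G : SimpleGraph Vtx} {k k' : ℕ} {q q' : ℕ → Vtx}
    (h : IsFinPath G k q) (h' : IsFinPath G k' q') (hglue : q k = q' 0)
    (hdis : ∀ i ≤ k, ∀ j ≤ k', q i = q' j → i = k ∧ j = 0) :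
    IsFinPath G (k + k') (pappend k q q') := by
  constructor
  · intro x hx y hy hxy
    simp only [Set.mem_Iic] at hx hy
    rcases le_or_gt x k with hx1 | hx1 <;> rcases le_or_gt y k with hy1 | hy1
    · rw [pappend_left hx1, pappend_left hy1] at hxy
      exact h.1 (Set.mem_Iic.mpr hx1) (Set.mem_Iic.mpr hy1) hxy
    · rw [pappend_left hx1] at hxy
      have hy2 : y = k + (y - k) := by omega
      rw [hy2, pappend_right hglue] at hxy
      obtain ⟨rfl, h3⟩ := hdis x hx1 (y - k) (by omega) hxy
      omega
    · rw [pappend_left hy1] at hxy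
      have hx2 : x = k + (x - k) := by omega
      rw [hx2, pappend_right hglue] at hxy
      obtain ⟨rfl, h3⟩ := hdis y hy1 (x - k) (by omega) hxy.symm
      omega
    · have hx2 : x = k + (x - k) := by omega
      have hy2 : y = k + (y - k) := by omega
      rw [hx2, pappend_right hglue, hy2, pappend_right hglue] at hxy
      have := h'.1 (Set.mem_Iic.mpr (by omega : x - k ≤ k'))
        (Set.mem_Iic.mpr (by omega : y - k ≤ k')) hxy
      omega
  · intro i hi
    rcases lt_or_ge i k with h1 | h1
    · rw [pappend_left h1.le, pappend_left (Nat.succ_le_of_lt h1)]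
      exact h.2 i h1
    · have e1 : pappend k q q' i = q' (i - k) := by
        have hh : i = k + (i - k) := by omega
        have := pappend_right (k := k) (q := q) (q' := q') hglue (i - k)
        rwa [← hh] at this
      have e2 : pappend k q q' (i + 1) = q' (i - k + 1) := by
        have hh : i + 1 = k + (i - k + 1) := by omega
        have := pappend_right (k := k) (q := q) (q' := q') hglue (i - k + 1)
        rwa [← hh] at this
      rw [e1, e2]
      exact h'.2 _ (by omega)

/-- A vertical run along a column. -/
lemma run_ex {o : Ordinal} (ho : o < omega1) (a c : ℕ) :
    ∃ q : ℕ → Vtx, IsFinPath (omegaGraph b) (max a c - min a c) q ∧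
      (∀ i, q i = vx o ho (if a ≤ c then a + i else a - i)) ∧
      q 0 = vx o ho a ∧ q (max a c - min a c) = vx o ho c ∧
      (∀ i ≤ max a c - min a c, co (q i) = o ∧ min a c ≤ lv (q i) ∧ lv (q i) ≤ max a c) := by
  rcases le_or_gt a c with h1 | h1
  · have hmax : max a c = c := max_eq_right h1
    have hmin : min a c = a := min_eq_left h1
    refine ⟨fun i => vx o ho (a + i), ⟨?_, ?_⟩, fun i => by simp [h1], by simp, ?_, ?_⟩
    · intro x hx y hy hxy
      rw [vx_eq_iff] at hxy
      omega
    · intro i hi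
      show (omegaGraph b).Adj (vx o ho (a + i)) (vx o ho (a + (i + 1)))
      have hh : a + (i+1) = (a + i) + 1 := by omega
      rw [hh]
      exact adj_vert ho (a + i)
    · show vx o ho (a + (max a c - min a c)) = vx o ho c
      exact vx_inj rfl (by omega)
    · intro i hi
      rw [hmax, hmin] at hi ⊢
      refine ⟨rfl, by simp only [lv_vx]; omega, by simp only [lv_vx]; omega⟩
  · have hmax : max a c = a := max_eq_left h1.le
    have hmin : min a c = c := min_eq_right h1.le
    have hne : ¬ a ≤ c := not_le.mpr h1
    refine ⟨fun i => vx o ho (a - i), ⟨?_, ?_⟩, fun i => by simp [hne], by simp, ?_, ?_⟩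
    · intro x hx y hy hxy
      rw [Set.mem_Iic, hmax, hmin] at hx hy
      rw [vx_eq_iff] at hxy
      omega
    · intro i hi
      rw [hmax, hmin] at hi
      show (omegaGraph b).Adj (vx o ho (a - i)) (vx o ho (a - (i + 1)))
      have hh : a - i = (a - (i+1)) + 1 := by omega
      rw [hh]
      exact (adj_vert ho (a - (i+1))).symm
    · show vx o ho (a - (max a c - min a c)) = vx o ho c
      exact vx_inj rfl (by omega)
    · intro i hi
      rw [hmax, hmin] at hi ⊢
      refine ⟨rfl, by simp only [lv_vx]; omega, by simp only [lv_vx]; omega⟩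

end Paths


section Climb

variable {b : Ordinal → ℕ → Ordinal}

lemma vtx_ext {x y : Vtx} (h1 : co x = co y) (h2 : lv x = lv y) : x = y := by
  obtain ⟨⟨x1, hx1⟩, x2⟩ := x
  obtain ⟨⟨y1, hy1⟩, y2⟩ := y
  simp only [co, lv] at h1 h2
  subst h1; subst h2; rfl

lemma adj_succ' {o : Ordinal} (h : o < omega1) (h' : Order.succ o < omega1) (n : ℕ) :
    (omegaGraph b).Adj (vx o h n) (vx (Order.succ o) h' n) := by
  have hs : o + 1 < omega1 := by rw [Ordinal.add_one_eq_succ]; exact h'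
  have h2 := adj_succ (b := b) h hs n
  have h3 : vx (o + 1) hs n = vx (Order.succ o) h' n :=
    vtx_ext (by simp) rfl
  rwa [h3] at h2

lemma two_ex {x y : Vtx} (h : (omegaGraph b).Adj x y) :
    IsFinPath (omegaGraph b) 1 (fun i => if i = 0 then x else y) := by
  constructor
  · intro i hi j hj hij
    simp only [Set.mem_Iic] at hi hj
    rcases Nat.eq_zero_or_pos i with rfl | hi0 <;> rcases Nat.eq_zero_or_pos j with rfl | hj0
    · rfl
    · simp only [if_pos rfl, if_neg (Nat.pos_iff_ne_zero.mp hj0)] at hij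
      exact absurd hij h.ne
    · simp only [if_pos rfl, if_neg (Nat.pos_iff_ne_zero.mp hi0)] at hij
      exact absurd hij.symm h.ne
    · omega
  · intro i hi
    interval_cases i
    simpa using h

/-- The climbing lemma: from any column `β` one can reach any higher column
`T < ω₁` by a finite path whose interior stays strictly between `β` and `T`,
starting at any prescribed level `m₀`, with all levels at least `m₀`. -/
lemma climb_ex
    (hmono : ∀ α : Ordinal, α < omega1 → Order.IsSuccLimit α → StrictMono (b α))
    (hlt : ∀ α : Ordinal, α < omega1 → Order.IsSuccLimit α → ∀ n, b α n < α)
    (hconv : ∀ α : Ordinal, α < omega1 → Order.IsSuccLimit α → ∀ γ < α, ∃ n, γ ≤ b α n) :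
    ∀ T : Ordinal, T < omega1 → ∀ β, β < T → ∀ m₀ : ℕ,
    ∃ (k : ℕ) (q : ℕ → Vtx), IsFinPath (omegaGraph b) k q ∧
      co (q 0) = β ∧ lv (q 0) = m₀ ∧ co (q k) = T ∧ m₀ ≤ lv (q k) ∧
      (∀ i ≤ k, β ≤ co (q i) ∧ co (q i) ≤ T ∧ m₀ ≤ lv (q i)) ∧
      (∀ i ≤ k, co (q i) = β → i = 0) ∧
      (∀ i ≤ k, co (q i) = T → i = k) := by
  intro T
  induction T using Ordinal.induction with
  | _ T IH =>
    intro hT β hβ m₀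
    rcases Ordinal.zero_or_succ_or_isSuccLimit T with rfl | ⟨W, rfl⟩ | hlim
    · exact absurd hβ (not_lt_of_ge (zero_le (a := β)))
    · -- successor case
      have hW : W < Order.succ W := Order.lt_succ_of_le le_rfl
      have hWω : W < omega1 := lt_trans hW hT
      have hsucc : (W + 1 : Ordinal) = Order.succ W := Ordinal.add_one_eq_succ W
      rcases lt_or_eq_of_le (Order.lt_succ_iff.mp hβ) with hβW | rfl
      · -- β < W : extend the path to W by one predecessor edge
        obtain ⟨k, q, hq, h0c, h0l, hkc, hkl, hbnd, hbot, htop⟩ := IH W hW hWω β hβW m₀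
        have hadj : (omegaGraph b).Adj (q k) (vx (Order.succ W) hT (lv (q k))) := by
          have h1 : q k = vx W hWω (lv (q k)) := vtx_ext (by simpa using hkc) (by simp)
          rw [h1]
          exact adj_succ' hWω hT (lv (q k))
        set pr : ℕ → Vtx := fun i => if i = 0 then q k else vx (Order.succ W) hT (lv (q k))
          with hpr
        have hdis : ∀ i ≤ k, ∀ j ≤ 1, q i = pr j → i = k ∧ j = 0 := by
          intro i hi j hj hij
          rcases Nat.le_one_iff_eq_zero_or_eq_one.mp hj with rfl | rfl
          · simp only [hpr, if_pos rfl] at hij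
            have : co (q i) = W := by rw [hij]; simpa using hkc
            have hik := htop i hi this
            exact ⟨hik, rfl⟩
          · simp only [hpr, if_neg one_ne_zero] at hij
            have h2 : co (q i) = Order.succ W := by rw [hij]; simp
            have h3 := (hbnd i hi).2.1
            rw [h2] at h3
            exact absurd h3 (not_le.mpr hW)
        have hglue : q k = pr 0 := by simp [hpr]
        refine ⟨k + 1, pappend k q pr, isFinPath_pappend hq (two_ex hadj) hglue hdis, ?_, ?_, ?_, ?_, ?_, ?_, ?_⟩
        · rw [pappend_left (Nat.zero_le k)]; exact h0c
        · rw [pappend_left (Nat.zero_le k)]; exact h0l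
        · have := pappend_right (q := q) (q' := pr) hglue 1
          rw [this]; simp [hpr]
        · have := pappend_right (q := q) (q' := pr) hglue 1
          rw [this]; simpa [hpr] using hkl
        · intro i hi
          rcases le_or_gt i k with h1 | h1
          · rw [pappend_left h1]
            obtain ⟨a1, a2, a3⟩ := hbnd i h1
            exact ⟨a1, le_trans a2 (le_of_lt hW), a3⟩
          · have hik : i = k + 1 := by omega
            subst hik
            rw [pappend_right hglue 1]
            simp [hpr, hkl]
            exact le_of_lt hβ
        · intro i hi hco
          rcases le_or_gt i k with h1 | h1
          · rw [pappend_left h1] at hco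
            exact hbot i h1 hco
          · have hik : i = k + 1 := by omega
            subst hik
            rw [pappend_right hglue 1] at hco
            simp [hpr] at hco
            exact absurd hco (ne_of_gt (lt_of_lt_of_le hβW (le_of_lt hW)))
        · intro i hi hco
          rcases le_or_gt i k with h1 | h1
          · rw [pappend_left h1] at hco
            have := (hbnd i h1).2.1
            rw [hco] at this
            exact absurd this (not_le.mpr hW)
          · omega
      · -- β = W : single predecessor edge
        have hadj : (omegaGraph b).Adj (vx β hWω m₀) (vx (Order.succ β) hT m₀) :=
          adj_succ' hWω hT m₀
        refine ⟨1, fun i => if i = 0 then vx β hWω m₀ else vx (Order.succ β) hT m₀,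
          two_ex hadj, by simp, by simp, by simp, by simp, ?_, ?_, ?_⟩
        · intro i hi
          rcases Nat.eq_zero_or_pos i with rfl | hi0
          · simp [Order.le_succ]
          · have : i = 1 := by omega
            subst this
            simp only [if_neg one_ne_zero, co_vx, lv_vx]
            exact ⟨le_of_lt hβ, le_rfl, le_rfl⟩
        · intro i hi hco
          rcases Nat.eq_zero_or_pos i with rfl | hi0
          · rfl
          · have : i = 1 := by omega
            subst this
            simp only [if_neg one_ne_zero, co_vx] at hco
            exact absurd hco.symm (ne_of_lt hβ)
        · intro i hi hco
          rcases Nat.eq_zero_or_pos i with rfl | hi0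
          · simp only [if_pos rfl, co_vx] at hco
            exact absurd hco (ne_of_lt hβ)
          · omega
    · -- limit case
      have hβω : β < omega1 := lt_trans hβ hT
      have hβ1 : β + 1 < T := by
        rw [Ordinal.add_one_eq_succ]
        exact hlim.succ_lt hβ
      obtain ⟨n, hn⟩ := hconv T hT hlim (β + 1) hβ1
      set m := max n m₀ with hmdef
      have hm₀ : m₀ ≤ m := le_max_right n m₀
      have hbm : β < b T m := by
        have h1 : b T n ≤ b T m := (hmono T hT hlim).monotone (le_max_left n m₀)
        have h2 : β < b T n := lt_of_lt_of_le (lt_add_one β) hn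
        exact lt_of_lt_of_le h2 h1
      set v := b T m with hvdef
      have hv : v < T := hlt T hT hlim m
      have hvω : v < omega1 := lt_trans hv hT
      obtain ⟨k, q, hq, h0c, h0l, hkc, hkl, hbnd, hbot, htop⟩ := IH v hv hvω β hbm m₀
      set e := lv (q k) with hedef
      obtain ⟨r, hr, hrf, hr0, hrd, hrbnd⟩ := run_ex (b := b) hvω e m
      set d := max e m - min e m with hddef
      have hglue1 : q k = r 0 := by
        rw [hr0]
        exact vtx_ext (by simpa using hkc) (by simp [hedef])
      have hdis1 : ∀ i ≤ k, ∀ j ≤ d, q i = r j → i = k ∧ j = 0 := by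
        intro i hi j hj hij
        have hcoi : co (q i) = v := by
          rw [hij, hrf j]; simp
        have hik := htop i hi hcoi
        subst hik
        refine ⟨rfl, ?_⟩
        have hlvj : lv (r j) = e := by rw [← hij]
        rw [hrf j] at hlvj
        simp only [lv_vx] at hlvj
        rcases le_or_gt e m with h1 | h1
        · rw [if_pos h1] at hlvj; omega
        · rw [if_neg (not_le.mpr h1)] at hlvj
          have : j ≤ e - m := by
            rw [hddef, max_eq_left h1.le, min_eq_right h1.le] at hj
            exact hj
          omega
      have hQ := isFinPath_pappend hq hr hglue1 hdis1
      set Q : ℕ → Vtx := pappend k q r with hQdef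
      have hQleft : ∀ i ≤ k, Q i = q i := fun i hi => pappend_left hi
      have hQright : ∀ j, Q (k + j) = r j := fun j => pappend_right hglue1 j
      have hQlast : Q (k + d) = vx v hvω m := by rw [hQright d, hrd]
      -- ladder edge to T
      have hneT : v ≠ T := ne_of_lt hv
      have hadj : (omegaGraph b).Adj (vx v hvω m) (vx T hT m) := by
        have := adj_ladder (b := b) hT hlim m (by rwa [← hvdef]) (by rwa [← hvdef])
        convert this using 2
      set pr : ℕ → Vtx := fun i => if i = 0 then vx v hvω m else vx T hT m with hprdef
      have hglue2 : Q (k + d) = pr 0 := by rw [hQlast]; simp [hprdef]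
      have hQbnd : ∀ i ≤ k + d, β ≤ co (Q i) ∧ co (Q i) ≤ v ∧ m₀ ≤ lv (Q i) := by
        intro i hi
        rcases le_or_gt i k with h1 | h1
        · rw [hQleft i h1]
          exact hbnd i h1
        · have hieq : i = k + (i - k) := by omega
          rw [hieq, hQright (i - k)]
          obtain ⟨a1, a2, a3⟩ := hrbnd (i - k) (by omega)
          refine ⟨?_, le_of_eq a1, ?_⟩
          · rw [a1]; exact le_of_lt hbm
          · have : m₀ ≤ min e m := le_min (by rw [hedef]; exact hkl) hm₀
            omega
      have hQtop : ∀ i ≤ k + d, co (Q i) = v → lv (Q i) = m → i = k + d := by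
        intro i hi hcov hlvm
        rcases le_or_gt i k with h1 | h1
        · rw [hQleft i h1] at hcov hlvm
          have hik := htop i h1 hcov
          subst hik
          have : e = m := by rw [hedef]; exact hlvm
          have : d = 0 := by omega
          omega
        · have hieq : i = k + (i - k) := by omega
          rw [hieq, hQright (i - k)] at hlvm
          rw [hrf (i - k)] at hlvm
          simp only [lv_vx] at hlvm
          have hjd : i - k ≤ d := by omega
          rcases le_or_gt e m with h2 | h2
          · rw [if_pos h2] at hlvm
            have : d = m - e := by rw [hddef]; omega
            omega
          · rw [if_neg (not_le.mpr h2)] at hlvm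
            have hd2 : d = e - m := by rw [hddef]; omega
            omega
      have hdis2 : ∀ i ≤ k + d, ∀ j ≤ 1, Q i = pr j → i = k + d ∧ j = 0 := by
        intro i hi j hj hij
        rcases Nat.eq_zero_or_pos j with rfl | hj0
        · simp only [hprdef, if_pos rfl] at hij
          have h1 : co (Q i) = v := by rw [hij]; simp
          have h2 : lv (Q i) = m := by rw [hij]; simp
          exact ⟨hQtop i hi h1 h2, rfl⟩
        · have : j = 1 := by omega
          subst this
          simp only [hprdef, if_neg one_ne_zero] at hij
          have h1 : co (Q i) = T := by rw [hij]; simp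
          have := (hQbnd i hi).2.1
          rw [h1] at this
          exact absurd this (not_le.mpr hv)
      have hF := isFinPath_pappend hQ (two_ex hadj) hglue2 hdis2
      set F : ℕ → Vtx := pappend (k + d) Q pr with hFdef
      have hFleft : ∀ i ≤ k + d, F i = Q i := fun i hi => pappend_left hi
      have hFlast : F (k + d + 1) = vx T hT m := by
        rw [hFdef]
        have := pappend_right (q := Q) (q' := pr) hglue2 1
        rw [this]; simp [hprdef]
      refine ⟨k + d + 1, F, hF, ?_, ?_, ?_, ?_, ?_, ?_, ?_⟩
      · rw [hFleft 0 (by omega), hQleft 0 (by omega)]; exact h0c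
      · rw [hFleft 0 (by omega), hQleft 0 (by omega)]; exact h0l
      · rw [hFlast]; simp
      · rw [hFlast]; simpa using hm₀
      · intro i hi
        rcases le_or_gt i (k + d) with h1 | h1
        · rw [hFleft i h1]
          obtain ⟨a1, a2, a3⟩ := hQbnd i h1
          exact ⟨a1, le_trans a2 (le_of_lt hv), a3⟩
        · have : i = k + d + 1 := by omega
          subst this
          rw [hFlast]
          simp only [co_vx, lv_vx]
          exact ⟨le_of_lt hβ, le_rfl, hm₀⟩
      · intro i hi hco
        rcases le_or_gt i (k + d) with h1 | h1
        · rw [hFleft i h1] at hco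
          rcases le_or_gt i k with h2 | h2
          · rw [hQleft i h2] at hco
            exact hbot i h2 hco
          · have hieq : i = k + (i - k) := by omega
            rw [hieq, hQright (i - k), hrf (i - k)] at hco
            simp only [co_vx] at hco
            exact absurd hco.symm (ne_of_lt hbm)
        · have : i = k + d + 1 := by omega
          subst this
          rw [hFlast] at hco
          simp only [co_vx] at hco
          exact absurd hco.symm (ne_of_lt hβ)
      · intro i hi hco
        rcases le_or_gt i (k + d) with h1 | h1
        · rw [hFleft i h1] at hco
          have := (hQbnd i h1).2.1
          rw [hco] at this
          exact absurd this (not_le.mpr hv)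
        · omega

end Climb


section Cat

variable {α : Type*}

/-- Concatenation of infinitely many finite chunks, starting from chunk `j`. -/
noncomputable def catAux (L : ℕ → ℕ) (q : ℕ → ℕ → α) : ℕ → ℕ → α
  | j, n =>
    if h : n < max 1 (L j) then q j n
    else catAux L q (j+1) (n - max 1 (L j))
  termination_by j n => n
  decreasing_by omega

/-- Concatenation of infinitely many finite chunks. -/
noncomputable def cat (L : ℕ → ℕ) (q : ℕ → ℕ → α) : ℕ → α := catAux L q 0

/-- Cumulative offsets. -/
def cum (L : ℕ → ℕ) : ℕ → ℕ
  | 0 => 0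
  | j+1 => cum L j + L j

variable {L : ℕ → ℕ} {q : ℕ → ℕ → α}

lemma catAux_lt {j n : ℕ} (h : n < L j) : catAux L q j n = q j n := by
  rw [catAux]
  rw [dif_pos (by omega)]

lemma catAux_add (hL : ∀ j, 1 ≤ L j) (j n : ℕ) : catAux L q j (L j + n) = catAux L q (j+1) n := by
  have h1 : max 1 (L j) = L j := by have := hL j; omega
  rw [catAux]
  rw [dif_neg (by omega), h1]
  congr 1
  omega

lemma catAux_le (hL : ∀ j, 1 ≤ L j) (hglue : ∀ j, q j (L j) = q (j+1) 0) {j n : ℕ} (h : n ≤ L j) : catAux L q j n = q j n := by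
  rcases lt_or_eq_of_le h with h1 | rfl
  · exact catAux_lt h1
  · have h2 : catAux L q j (L j + 0) = catAux L q (j+1) 0 := catAux_add hL j 0
    rw [Nat.add_zero] at h2
    rw [h2, catAux_lt (hL (j+1)), ← hglue]

lemma catAux_adj (hL : ∀ j, 1 ≤ L j) (hglue : ∀ j, q j (L j) = q (j+1) 0) {G : α → α → Prop} (hadj : ∀ j, ∀ i < L j, G (q j i) (q j (i+1))) :
    ∀ n j, G (catAux L q j n) (catAux L q j (n+1)) := by
  intro n
  induction n using Nat.strong_induction_on with
  | _ n IH =>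
    intro j
    rcases lt_or_ge (n + 1) (L j) with h1 | h1
    · rw [catAux_lt (by omega), catAux_lt h1]
      exact hadj j n (by omega)
    · rcases eq_or_lt_of_le h1 with h2 | h2
      · rw [catAux_lt (by omega), catAux_le hL hglue (le_of_eq h2.symm)]
        exact hadj j n (by omega)
      · have e1 : catAux L q j n = catAux L q (j+1) (n - L j) := by
          have hh : n = L j + (n - L j) := by omega
          have := catAux_add (q := q) hL j (n - L j)
          rwa [← hh] at this
        have e2 : catAux L q j (n+1) = catAux L q (j+1) (n - L j + 1) := by
          have hh : n + 1 = L j + (n - L j + 1) := by omega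
          have := catAux_add (q := q) hL j (n - L j + 1)
          rwa [← hh] at this
        rw [e1, e2]
        exact IH (n - L j) (by have := hL j; omega) (j+1)

lemma catAux_repr (hL : ∀ j, 1 ≤ L j) : ∀ n j, ∃ j' i, j ≤ j' ∧ i < L j' ∧ catAux L q j n = q j' i := by
  intro n
  induction n using Nat.strong_induction_on with
  | _ n IH =>
    intro j
    rcases lt_or_ge n (L j) with h1 | h1
    · exact ⟨j, n, le_rfl, h1, catAux_lt h1⟩
    · have h3 : n = L j + (n - L j) := by omega
      rw [h3, catAux_add hL]
      obtain ⟨j', i, hj, hi, he⟩ := IH (n - L j) (by have := hL j; omega) (j+1)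
      exact ⟨j', i, by omega, hi, he⟩

lemma catAux_inj (hL : ∀ j, 1 ≤ L j) (hglue : ∀ j, q j (L j) = q (j+1) 0)
    (hinj : ∀ j, Set.InjOn (q j) (Set.Iic (L j)))
    (hcross : ∀ j j', j < j' → ∀ i ≤ L j, ∀ i' ≤ L j', q j i = q j' i' →
      (j' = j + 1 ∧ i = L j ∧ i' = 0)) :
    ∀ s n n' j, n + n' ≤ s → catAux L q j n = catAux L q j n' → n = n' := by
  intro s
  induction s with
  | zero => intro n n' j h _; omega
  | succ s IH =>
    intro n n' j hs he
    rcases lt_or_ge n (L j) with h1 | h1 <;> rcases lt_or_ge n' (L j) with h2 | h2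
    · rw [catAux_lt h1, catAux_lt h2] at he
      exact hinj j (Set.mem_Iic.mpr h1.le) (Set.mem_Iic.mpr h2.le) he
    · -- n in chunk j, n' further: impossible
      exfalso
      have h3 : n' = L j + (n' - L j) := by omega
      rw [catAux_lt h1, h3, catAux_add hL] at he
      obtain ⟨j', i, hj, hi, hrepr⟩ := catAux_repr hL (n' - L j) (j+1)
      rw [hrepr] at he
      obtain ⟨_, h5, _⟩ := hcross j j' (by omega) n h1.le i hi.le he
      omega
    · exfalso
      have h3 : n = L j + (n - L j) := by omega
      rw [catAux_lt h2, h3, catAux_add hL] at he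
      obtain ⟨j', i, hj, hi, hrepr⟩ := catAux_repr hL (n - L j) (j+1)
      rw [hrepr] at he
      obtain ⟨_, h5, _⟩ := hcross j j' (by omega) n' h2.le i hi.le he.symm
      omega
    · have h3 : n = L j + (n - L j) := by omega
      have h4 : n' = L j + (n' - L j) := by omega
      rw [h3, catAux_add hL, h4, catAux_add hL] at he
      have := IH (n - L j) (n' - L j) (j+1) (by have := hL j; omega) he
      omega

lemma cat_inj (hL : ∀ j, 1 ≤ L j) (hglue : ∀ j, q j (L j) = q (j+1) 0)
    (hinj : ∀ j, Set.InjOn (q j) (Set.Iic (L j)))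
    (hcross : ∀ j j', j < j' → ∀ i ≤ L j, ∀ i' ≤ L j', q j i = q j' i' →
      (j' = j + 1 ∧ i = L j ∧ i' = 0)) :
    Function.Injective (cat L q) := by
  intro n n' he
  exact catAux_inj hL hglue hinj hcross (n + n') n n' 0 le_rfl he

lemma cat_cum_add (hL : ∀ j, 1 ≤ L j) (j n : ℕ) : cat L q (cum L j + n) = catAux L q j n := by
  induction j generalizing n with
  | zero =>
    show cat L q (0 + n) = catAux L q 0 n
    rw [Nat.zero_add]
    rfl
  | succ j IH =>
    have h1 : cum L (j+1) + n = cum L j + (L j + n) := by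
      simp [cum]; omega
    rw [h1, IH, catAux_add hL]

lemma cat_start (hL : ∀ j, 1 ≤ L j) (hglue : ∀ j, q j (L j) = q (j+1) 0) (j : ℕ) : cat L q (cum L j) = q j 0 := by
  have := cat_cum_add hL (q := q) j 0
  rw [Nat.add_zero] at this
  rw [this, catAux_le hL hglue (Nat.zero_le _)]

lemma cat_adj (hL : ∀ j, 1 ≤ L j) (hglue : ∀ j, q j (L j) = q (j+1) 0) {G : α → α → Prop} (hadj : ∀ j, ∀ i < L j, G (q j i) (q j (i+1))) (n : ℕ) :
    G (cat L q n) (cat L q (n+1)) := catAux_adj hL hglue hadj n 0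

lemma cat_range (hL : ∀ j, 1 ≤ L j) (n : ℕ) : ∃ j i, i < L j ∧ cat L q n = q j i := by
  obtain ⟨j', i, _, hi, he⟩ := catAux_repr (q := q) hL n 0
  exact ⟨j', i, hi, he⟩

end Cat


section Chunk

variable {b : Ordinal → ℕ → Ordinal}

/-- A chunk: a path from `(A, j)` to `(B, t)` through the open interval
`(A, B)`, hitting column `A` only at the start, and hitting column `B` at
level `t` only at the end. -/
lemma chunk_core
    (hmono : ∀ α : Ordinal, α < omega1 → Order.IsSuccLimit α → StrictMono (b α))
    (hlt : ∀ α : Ordinal, α < omega1 → Order.IsSuccLimit α → ∀ n, b α n < α)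
    (hconv : ∀ α : Ordinal, α < omega1 → Order.IsSuccLimit α → ∀ γ < α, ∃ n, γ ≤ b α n)
    {A B : Ordinal} (hA : A < omega1) (hB : B < omega1)
    (hAB : A < B) (hBlim : Order.IsSuccLimit B) (j t : ℕ) :
    ∃ (Lk : ℕ) (q : ℕ → Vtx), 1 ≤ Lk ∧ IsFinPath (omegaGraph b) Lk q ∧
      q 0 = vx A hA j ∧ q Lk = vx B hB t ∧
      (∀ i ≤ Lk, A ≤ co (q i) ∧ co (q i) ≤ B) ∧
      (∀ i ≤ Lk, co (q i) = A → i = 0) ∧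
      (∀ i < Lk, co (q i) = B → lv (q i) ≠ t) := by
  have hA1B : A + 1 < B := by
    rw [Ordinal.add_one_eq_succ]
    exact hBlim.succ_lt hAB
  have hA1 : A + 1 < omega1 := lt_trans hA1B hB
  -- step 1 : the predecessor edge
  set p1 : ℕ → Vtx := fun i => if i = 0 then vx A hA j else vx (A+1) hA1 j with hp1
  have hp1path : IsFinPath (omegaGraph b) 1 p1 := two_ex (adj_succ hA hA1 j)
  -- step 2 : the climb
  obtain ⟨k, c, hc, c0co, c0lv, ckco, cklv, cbnd, cbot, ctop⟩ :=
    climb_ex hmono hlt hconv B hB (A+1) hA1B j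
  set e := lv (c k) with hedef
  have hglue1 : p1 1 = c 0 := by
    apply vtx_ext
    · simp only [hp1, if_neg one_ne_zero, co_vx]
      exact c0co.symm
    · simp only [hp1, if_neg one_ne_zero, lv_vx]
      exact c0lv.symm
  have hdis1 : ∀ i ≤ 1, ∀ i' ≤ k, p1 i = c i' → i = 1 ∧ i' = 0 := by
    intro i hi i' hi' hii
    rcases Nat.eq_zero_or_pos i with rfl | hi0
    · exfalso
      have h1 : co (c i') = A := by
        rw [← hii]; simp [hp1]
      have h2 := (cbnd i' hi').1
      rw [h1] at h2
      exact absurd h2 (not_le.mpr (lt_add_one A))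
    · have hieq : i = 1 := by omega
      subst hieq
      refine ⟨rfl, cbot i' hi' ?_⟩
      rw [← hii]; simp [hp1]
  have hQ := isFinPath_pappend hp1path hc hglue1 hdis1
  set Q : ℕ → Vtx := pappend 1 p1 c with hQdef
  have hQleft : ∀ i ≤ 1, Q i = p1 i := fun i hi => pappend_left hi
  have hQright : ∀ i', Q (1 + i') = c i' := fun i' => pappend_right hglue1 i'
  -- facts about Q
  have hQ0 : Q 0 = vx A hA j := by rw [hQleft 0 (by omega)]; simp [hp1]
  have hQbnd : ∀ i ≤ 1 + k, A ≤ co (Q i) ∧ co (Q i) ≤ B := by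
    intro i hi
    rcases Nat.eq_zero_or_pos i with rfl | hi0
    · rw [hQ0]; simp only [co_vx]; exact ⟨le_rfl, le_of_lt hAB⟩
    · have hieq : i = 1 + (i - 1) := by omega
      rw [hieq, hQright (i-1)]
      obtain ⟨a1, a2, _⟩ := cbnd (i-1) (by omega)
      exact ⟨le_trans (le_of_lt (lt_add_one A)) a1, a2⟩
  have hQtopB : ∀ i ≤ 1 + k, co (Q i) = B → i = 1 + k := by
    intro i hi hco
    rcases Nat.eq_zero_or_pos i with rfl | hi0
    · rw [hQ0] at hco; simp only [co_vx] at hco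
      exact absurd hco (ne_of_lt hAB)
    · have hieq : i = 1 + (i - 1) := by omega
      rw [hieq, hQright (i-1)] at hco
      have := ctop (i-1) (by omega) hco
      omega
  have hQbotA : ∀ i ≤ 1 + k, co (Q i) = A → i = 0 := by
    intro i hi hco
    rcases Nat.eq_zero_or_pos i with rfl | hi0
    · rfl
    · exfalso
      have hieq : i = 1 + (i - 1) := by omega
      rw [hieq, hQright (i-1)] at hco
      have := (cbnd (i-1) (by omega)).1
      rw [hco] at this
      exact absurd this (not_le.mpr (lt_add_one A))
  have hQlast : Q (1 + k) = vx B hB e := by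
    rw [hQright k]
    exact vtx_ext (by simpa using ckco) (by simp [hedef])
  -- step 3 : the vertical run on column B from e to t
  obtain ⟨r, hr, hrf, hr0, hrd, hrbnd⟩ := run_ex (b := b) hB e t
  set d := max e t - min e t with hddef
  have hglue2 : Q (1 + k) = r 0 := by rw [hQlast, hr0]
  have hdis2 : ∀ i ≤ 1 + k, ∀ i' ≤ d, Q i = r i' → i = 1 + k ∧ i' = 0 := by
    intro i hi i' hi' hii
    have h1 : co (Q i) = B := by rw [hii, hrf i']; simp
    have h2 := hQtopB i hi h1
    subst h2
    refine ⟨rfl, ?_⟩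
    have h3 : lv (r i') = e := by rw [← hii, hQlast]; simp
    rw [hrf i'] at h3
    simp only [lv_vx] at h3
    rcases le_or_gt e t with h4 | h4
    · rw [if_pos h4] at h3; omega
    · rw [if_neg (not_le.mpr h4)] at h3
      have : i' ≤ e - t := by
        rw [hddef, max_eq_left h4.le, min_eq_right h4.le] at hi'
        exact hi'
      omega
  have hF := isFinPath_pappend hQ hr hglue2 hdis2
  set F : ℕ → Vtx := pappend (1 + k) Q r with hFdef
  have hFleft : ∀ i ≤ 1 + k, F i = Q i := fun i hi => pappend_left hi
  have hFright : ∀ i', F (1 + k + i') = r i' := fun i' => pappend_right hglue2 i'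
  refine ⟨1 + k + d, F, by omega, hF, ?_, ?_, ?_, ?_, ?_⟩
  · rw [hFleft 0 (by omega)]; exact hQ0
  · rw [hFright d]; exact hrd
  · intro i hi
    rcases le_or_gt i (1 + k) with h1 | h1
    · rw [hFleft i h1]; exact hQbnd i h1
    · have hieq : i = 1 + k + (i - (1 + k)) := by omega
      rw [hieq, hFright (i - (1+k))]
      have := (hrbnd (i - (1+k)) (by omega)).1
      rw [this]
      exact ⟨le_of_lt hAB, le_rfl⟩
  · intro i hi hco
    rcases le_or_gt i (1 + k) with h1 | h1
    · rw [hFleft i h1] at hco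
      exact hQbotA i h1 hco
    · exfalso
      have hieq : i = 1 + k + (i - (1 + k)) := by omega
      rw [hieq, hFright (i - (1+k))] at hco
      have := (hrbnd (i - (1+k)) (by omega)).1
      rw [hco] at this
      exact absurd this (ne_of_lt hAB)
  · intro i hi hco
    rcases le_or_gt i (1 + k) with h1 | h1
    · rw [hFleft i h1] at hco ⊢
      have h2 := hQtopB i h1 hco
      subst h2
      rw [hQlast]
      simp only [lv_vx]
      -- here i = 1 + k < 1 + k + d so d ≥ 1, hence e ≠ t
      intro het
      rw [het] at hddef
      simp at hddef
      omega
    · have hieq : i = 1 + k + (i - (1 + k)) := by omega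
      rw [hieq, hFright (i - (1+k))] at hco ⊢
      rw [hrf (i - (1+k))]
      simp only [lv_vx]
      have hilt : i - (1+k) < d := by omega
      rcases le_or_gt e t with h4 | h4
      · rw [if_pos h4]
        have hd : d = t - e := by rw [hddef]; omega
        omega
      · rw [if_neg (not_le.mpr h4)]
        have hd : d = e - t := by rw [hddef]; omega
        omega

end Chunk


section Leaf

variable (b : Ordinal → ℕ → Ordinal)
variable (hmono : ∀ α : Ordinal, α < omega1 → Order.IsSuccLimit α → StrictMono (b α))
variable (hlt : ∀ α : Ordinal, α < omega1 → Order.IsSuccLimit α → ∀ n, b α n < α)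
variable (hconv : ∀ α : Ordinal, α < omega1 → Order.IsSuccLimit α → ∀ γ < α, ∃ n, γ ≤ b α n)

/-- Pick an element of a stationary set above a bound. -/
noncomputable def pick (S : Set Ordinal) (hS : Stat S) (x : Ordinal) (hx : x < omega1) :
    Ordinal := (hS.unbounded x hx).choose

lemma pick_mem {S : Set Ordinal} (hS : Stat S) {x : Ordinal} (hx : x < omega1) :
    pick S hS x hx ∈ S := (hS.unbounded x hx).choose_spec.1

lemma pick_gt {S : Set Ordinal} (hS : Stat S) {x : Ordinal} (hx : x < omega1) :
    x < pick S hS x hx := (hS.unbounded x hx).choose_spec.2.1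

lemma pick_ltω {S : Set Ordinal} (hS : Stat S) {x : Ordinal} (hx : x < omega1) :
    pick S hS x hx < omega1 := (hS.unbounded x hx).choose_spec.2.2

/-- The stations of the leaf over `θ`. -/
noncomputable def mu (θ : Ordinal) (hθ : θ < omega1) : ℕ → {o : Ordinal // o < omega1}
  | 0 => ⟨pick (SSet b hlt 1) (SSet_stat b hlt 1) θ hθ,
      pick_ltω (SSet_stat b hlt 1) hθ⟩
  | j+1 => ⟨pick (SSet b hlt (j+2)) (SSet_stat b hlt (j+2)) (mu θ hθ j).1 (mu θ hθ j).2,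
      pick_ltω (SSet_stat b hlt (j+2)) (mu θ hθ j).2⟩

lemma mu_mem (θ : Ordinal) (hθ : θ < omega1) (j : ℕ) :
    (mu b hlt θ hθ j).1 ∈ SSet b hlt (j+1) := by
  cases j with
  | zero => exact pick_mem (SSet_stat b hlt 1) hθ
  | succ j => exact pick_mem (SSet_stat b hlt (j+2)) (mu b hlt θ hθ j).2

lemma mu_gt (θ : Ordinal) (hθ : θ < omega1) : θ < (mu b hlt θ hθ 0).1 :=
  pick_gt (SSet_stat b hlt 1) hθ

lemma mu_lt_succ (θ : Ordinal) (hθ : θ < omega1) (j : ℕ) :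
    (mu b hlt θ hθ j).1 < (mu b hlt θ hθ (j+1)).1 :=
  pick_gt (SSet_stat b hlt (j+2)) (mu b hlt θ hθ j).2

lemma mu_strict (θ : Ordinal) (hθ : θ < omega1) :
    StrictMono (fun j => (mu b hlt θ hθ j).1) :=
  strictMono_nat_of_lt_succ (mu_lt_succ b hlt θ hθ)

lemma mu_limit (θ : Ordinal) (hθ : θ < omega1) (j : ℕ) :
    Order.IsSuccLimit (mu b hlt θ hθ j).1 :=
  (SSet_sub_LimS b hlt (j+1) (mu_mem b hlt θ hθ j)).2

lemma mu_pin (θ : Ordinal) (hθ : θ < omega1) (j : ℕ) :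
    b (mu b hlt θ hθ j).1 j = cval b hlt j :=
  SSet_pin b hlt (mu_mem b hlt θ hθ j)

lemma mu_gt' (θ : Ordinal) (hθ : θ < omega1) (j : ℕ) : θ < (mu b hlt θ hθ j).1 := by
  induction j with
  | zero => exact mu_gt b hlt θ hθ
  | succ j ih => exact lt_trans ih (mu_lt_succ b hlt θ hθ j)

/-- A bound for the stations of the leaf over `θ`. -/
noncomputable def muBnd (θ : Ordinal) (hθ : θ < omega1) : Ordinal :=
  (exists_omega1_bound (Set.range (fun j => (mu b hlt θ hθ j).1))
    (Set.countable_range _) (by rintro o ⟨j, rfl⟩; exact (mu b hlt θ hθ j).2)).choose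

lemma muBnd_ltω (θ : Ordinal) (hθ : θ < omega1) : muBnd b hlt θ hθ < omega1 :=
  (exists_omega1_bound (Set.range (fun j => (mu b hlt θ hθ j).1))
    (Set.countable_range _) (by rintro o ⟨j, rfl⟩; exact (mu b hlt θ hθ j).2)).choose_spec.1

lemma muBnd_ge (θ : Ordinal) (hθ : θ < omega1) (j : ℕ) :
    (mu b hlt θ hθ j).1 ≤ muBnd b hlt θ hθ :=
  (exists_omega1_bound (Set.range (fun j => (mu b hlt θ hθ j).1))
    (Set.countable_range _)
    (by rintro o ⟨j, rfl⟩; exact (mu b hlt θ hθ j).2)).choose_spec.2 _ ⟨j, rfl⟩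

/-- The chunk data of the leaf over `θ`. -/
noncomputable def chEx (θ : Ordinal) (hθ : θ < omega1) (j : ℕ) :=
  chunk_core hmono hlt hconv (mu b hlt θ hθ j).2 (mu b hlt θ hθ (j+1)).2
    (mu_lt_succ b hlt θ hθ j) (mu_limit b hlt θ hθ (j+1)) j (j+1)

noncomputable def chL (θ : Ordinal) (hθ : θ < omega1) (j : ℕ) : ℕ :=
  (chEx b hmono hlt hconv θ hθ j).choose

noncomputable def chQ (θ : Ordinal) (hθ : θ < omega1) (j : ℕ) : ℕ → Vtx :=
  (chEx b hmono hlt hconv θ hθ j).choose_spec.choose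

lemma chSpec (θ : Ordinal) (hθ : θ < omega1) (j : ℕ) :
    1 ≤ chL b hmono hlt hconv θ hθ j ∧
    IsFinPath (omegaGraph b) (chL b hmono hlt hconv θ hθ j) (chQ b hmono hlt hconv θ hθ j) ∧
    chQ b hmono hlt hconv θ hθ j 0 = vx (mu b hlt θ hθ j).1 (mu b hlt θ hθ j).2 j ∧
    chQ b hmono hlt hconv θ hθ j (chL b hmono hlt hconv θ hθ j) =
      vx (mu b hlt θ hθ (j+1)).1 (mu b hlt θ hθ (j+1)).2 (j+1) ∧
    (∀ i ≤ chL b hmono hlt hconv θ hθ j,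
      (mu b hlt θ hθ j).1 ≤ co (chQ b hmono hlt hconv θ hθ j i) ∧
      co (chQ b hmono hlt hconv θ hθ j i) ≤ (mu b hlt θ hθ (j+1)).1) ∧
    (∀ i ≤ chL b hmono hlt hconv θ hθ j,
      co (chQ b hmono hlt hconv θ hθ j i) = (mu b hlt θ hθ j).1 → i = 0) ∧
    (∀ i < chL b hmono hlt hconv θ hθ j,
      co (chQ b hmono hlt hconv θ hθ j i) = (mu b hlt θ hθ (j+1)).1 →
        lv (chQ b hmono hlt hconv θ hθ j i) ≠ j + 1) :=
  (chEx b hmono hlt hconv θ hθ j).choose_spec.choose_spec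

/-- The leaf ray over `θ`. -/
noncomputable def leafRay (θ : Ordinal) (hθ : θ < omega1) : ℕ → Vtx :=
  cat (chL b hmono hlt hconv θ hθ) (chQ b hmono hlt hconv θ hθ)

lemma leaf_hL (θ : Ordinal) (hθ : θ < omega1) : ∀ j, 1 ≤ chL b hmono hlt hconv θ hθ j :=
  fun j => (chSpec b hmono hlt hconv θ hθ j).1

lemma leaf_hglue (θ : Ordinal) (hθ : θ < omega1) :
    ∀ j, chQ b hmono hlt hconv θ hθ j (chL b hmono hlt hconv θ hθ j) =
      chQ b hmono hlt hconv θ hθ (j+1) 0 := by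
  intro j
  rw [(chSpec b hmono hlt hconv θ hθ j).2.2.2.1, (chSpec b hmono hlt hconv θ hθ (j+1)).2.2.1]

lemma leaf_cross (θ : Ordinal) (hθ : θ < omega1) :
    ∀ j j', j < j' → ∀ i ≤ chL b hmono hlt hconv θ hθ j, ∀ i' ≤ chL b hmono hlt hconv θ hθ j',
      chQ b hmono hlt hconv θ hθ j i = chQ b hmono hlt hconv θ hθ j' i' →
      (j' = j + 1 ∧ i = chL b hmono hlt hconv θ hθ j ∧ i' = 0) := by
  intro j j' hjj i hi i' hi' he
  have s := chSpec b hmono hlt hconv θ hθ j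
  have s' := chSpec b hmono hlt hconv θ hθ j'
  have h1 : co (chQ b hmono hlt hconv θ hθ j i) ≤ (mu b hlt θ hθ (j+1)).1 :=
    (s.2.2.2.2.1 i hi).2
  have h2 : (mu b hlt θ hθ j').1 ≤ co (chQ b hmono hlt hconv θ hθ j' i') :=
    (s'.2.2.2.2.1 i' hi').1
  have hj1 : j' = j + 1 := by
    by_contra hne
    have hj2 : j + 1 < j' := by omega
    have h3 : (mu b hlt θ hθ (j+1)).1 < (mu b hlt θ hθ j').1 :=
      mu_strict b hlt θ hθ hj2
    rw [he] at h1
    exact absurd (lt_of_lt_of_le (lt_of_le_of_lt h1 h3) h2) (lt_irrefl _)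
  subst hj1
  have hco : co (chQ b hmono hlt hconv θ hθ (j+1) i') = (mu b hlt θ hθ (j+1)).1 := by
    have h1' : co (chQ b hmono hlt hconv θ hθ (j+1) i') ≤ (mu b hlt θ hθ (j+1)).1 := by
      rw [← he]; exact h1
    exact le_antisymm h1' h2
  have hi'0 : i' = 0 := s'.2.2.2.2.2.1 i' hi' hco
  subst hi'0
  refine ⟨rfl, ?_, rfl⟩
  -- q j i = start of chunk (j+1), which is (mu (j+1), j+1)
  rw [s'.2.2.1] at he
  by_contra hne
  have hilt : i < chL b hmono hlt hconv θ hθ j := by omega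
  have hlv := s.2.2.2.2.2.2 i hilt (by rw [he]; simp)
  rw [he] at hlv
  simp at hlv

lemma leafRay_isRay (θ : Ordinal) (hθ : θ < omega1) :
    IsRay (omegaGraph b) (leafRay b hmono hlt hconv θ hθ) := by
  constructor
  · exact cat_inj (leaf_hL b hmono hlt hconv θ hθ) (leaf_hglue b hmono hlt hconv θ hθ)
      (fun j => (chSpec b hmono hlt hconv θ hθ j).2.1.1)
      (leaf_cross b hmono hlt hconv θ hθ)
  · intro n
    exact cat_adj (leaf_hL b hmono hlt hconv θ hθ) (leaf_hglue b hmono hlt hconv θ hθ)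
      (fun j i hi => (chSpec b hmono hlt hconv θ hθ j).2.1.2 i hi) n

lemma leafRay_range (θ : Ordinal) (hθ : θ < omega1) (n : ℕ) :
    θ < co (leafRay b hmono hlt hconv θ hθ n) ∧
    co (leafRay b hmono hlt hconv θ hθ n) ≤ muBnd b hlt θ hθ := by
  obtain ⟨j, i, hi, he⟩ := cat_range (leaf_hL b hmono hlt hconv θ hθ)
    (q := chQ b hmono hlt hconv θ hθ) n
  rw [leafRay, he]
  have s := chSpec b hmono hlt hconv θ hθ j
  obtain ⟨a1, a2⟩ := s.2.2.2.2.1 i hi.le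
  constructor
  · exact lt_of_lt_of_le (mu_gt' b hlt θ hθ j) a1
  · exact le_trans a2 (muBnd_ge b hlt θ hθ (j+1))

lemma leafRay_start (θ : Ordinal) (hθ : θ < omega1) (n : ℕ) :
    leafRay b hmono hlt hconv θ hθ (cum (chL b hmono hlt hconv θ hθ) n) =
      vx (mu b hlt θ hθ n).1 (mu b hlt θ hθ n).2 n := by
  rw [leafRay, cat_start (leaf_hL b hmono hlt hconv θ hθ) (leaf_hglue b hmono hlt hconv θ hθ) n,
    (chSpec b hmono hlt hconv θ hθ n).2.2.1]

end Leaf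


section RRaySec

variable (b : Ordinal → ℕ → Ordinal)
variable (hlt : ∀ α : Ordinal, α < omega1 → Order.IsSuccLimit α → ∀ n, b α n < α)

lemma adj_ladder' {α c : Ordinal} (hα : α < omega1) (hlim : Order.IsSuccLimit α) (n : ℕ)
    (hc : c < omega1) (hpin : b α n = c) (hne : c ≠ α) :
    (omegaGraph b).Adj (vx c hc n) (vx α hα n) := by
  have hb : b α n < omega1 := by rw [hpin]; exact hc
  have h1 := adj_ladder (b := b) hα hlim n hb (by rw [hpin]; exact hne)
  have h2 : vx (b α n) hb n = vx c hc n := vtx_ext (by simpa using hpin) rfl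
  rwa [h2] at h1

/-- A bound for the pinned values. -/
noncomputable def cBnd : Ordinal :=
  (exists_omega1_bound (Set.range (cval b hlt)) (Set.countable_range _)
    (by rintro o ⟨n, rfl⟩; exact cval_lt_omega1 b hlt n)).choose

lemma cBnd_ltω : cBnd b hlt < omega1 :=
  (exists_omega1_bound (Set.range (cval b hlt)) (Set.countable_range _)
    (by rintro o ⟨n, rfl⟩; exact cval_lt_omega1 b hlt n)).choose_spec.1

lemma cBnd_ge (n : ℕ) : cval b hlt n ≤ cBnd b hlt :=
  (exists_omega1_bound (Set.range (cval b hlt)) (Set.countable_range _)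
    (by rintro o ⟨n, rfl⟩; exact cval_lt_omega1 b hlt n)).choose_spec.2 _ ⟨n, rfl⟩

/-- The connector ordinals of the central ray. -/
noncomputable def rho : ℕ → {o : Ordinal // o < omega1}
  | 0 => ⟨pick (SSet b hlt 2) (SSet_stat b hlt 2) (cBnd b hlt) (cBnd_ltω b hlt),
      pick_ltω (SSet_stat b hlt 2) (cBnd_ltω b hlt)⟩
  | n+1 => ⟨pick (SSet b hlt (n+3)) (SSet_stat b hlt (n+3)) (rho n).1 (rho n).2,
      pick_ltω (SSet_stat b hlt (n+3)) (rho n).2⟩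

lemma rho_mem (n : ℕ) : (rho b hlt n).1 ∈ SSet b hlt (n+2) := by
  cases n with
  | zero => exact pick_mem (SSet_stat b hlt 2) (cBnd_ltω b hlt)
  | succ n => exact pick_mem (SSet_stat b hlt (n+3)) (rho b hlt n).2

lemma rho_limit (n : ℕ) : Order.IsSuccLimit (rho b hlt n).1 :=
  (SSet_sub_LimS b hlt (n+2) (rho_mem b hlt n)).2

lemma rho_strict : StrictMono (fun n => (rho b hlt n).1) := by
  apply strictMono_nat_of_lt_succ
  intro n
  exact pick_gt (SSet_stat b hlt (n+3)) (rho b hlt n).2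

lemma rho_gt_cBnd (n : ℕ) : cBnd b hlt < (rho b hlt n).1 := by
  induction n with
  | zero => exact pick_gt (SSet_stat b hlt 2) (cBnd_ltω b hlt)
  | succ n ih => exact lt_trans ih (rho_strict b hlt (Nat.lt_succ_self n))

lemma cval_lt_rho (m n : ℕ) : cval b hlt m < (rho b hlt n).1 :=
  lt_of_le_of_lt (cBnd_ge b hlt m) (rho_gt_cBnd b hlt n)

lemma rho_pin (n : ℕ) : b (rho b hlt n).1 n = cval b hlt n :=
  SSet_pin b hlt (SSet_sub b hlt (by omega) (rho_mem b hlt n))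

lemma rho_pin' (n : ℕ) : b (rho b hlt n).1 (n+1) = cval b hlt (n+1) :=
  SSet_pin b hlt (rho_mem b hlt n)

/-- The central ray. -/
noncomputable def RRay : ℕ → Vtx := fun k =>
  if k % 3 = 0 then vx (cval b hlt (k/3)) (cval_lt_omega1 b hlt (k/3)) (k/3)
  else if k % 3 = 1 then vx (rho b hlt (k/3)).1 (rho b hlt (k/3)).2 (k/3)
  else vx (rho b hlt (k/3)).1 (rho b hlt (k/3)).2 (k/3 + 1)

lemma RRay_hub (n : ℕ) : RRay b hlt (3 * n) =
    vx (cval b hlt n) (cval_lt_omega1 b hlt n) n := by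
  have h1 : (3 * n) % 3 = 0 := by omega
  have h2 : (3 * n) / 3 = n := by omega
  rw [RRay]
  rw [if_pos h1]
  exact vtx_ext (by simp [h2]) (by simp [h2])

lemma RRay_isRay : IsRay (omegaGraph b) (RRay b hlt) := by
  constructor
  · intro a a' he
    have h3 : a % 3 = 0 ∨ a % 3 = 1 ∨ a % 3 = 2 := by omega
    have h3' : a' % 3 = 0 ∨ a' % 3 = 1 ∨ a' % 3 = 2 := by omega
    have hrr : ∀ m m', (rho b hlt m).1 = (rho b hlt m').1 → m = m' := by
      intro m m' h
      exact (rho_strict b hlt).injective h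
    have E0 : ∀ x : ℕ, x % 3 = 0 → RRay b hlt x =
        vx (cval b hlt (x/3)) (cval_lt_omega1 b hlt (x/3)) (x/3) := by
      intro x h; rw [RRay]; simp only [h, if_pos rfl]; rfl
    have E1 : ∀ x : ℕ, x % 3 = 1 → RRay b hlt x =
        vx (rho b hlt (x/3)).1 (rho b hlt (x/3)).2 (x/3) := by
      intro x h; rw [RRay]; simp only [h]; rfl
    have E2 : ∀ x : ℕ, x % 3 = 2 → RRay b hlt x =
        vx (rho b hlt (x/3)).1 (rho b hlt (x/3)).2 (x/3 + 1) := by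
      intro x h; rw [RRay]; simp only [h]; rfl
    rcases h3 with h0 | h1 | h2
    · rcases h3' with h0' | h1' | h2'
      · rw [E0 a h0, E0 a' h0', vx_eq_iff] at he; omega
      · rw [E0 a h0, E1 a' h1', vx_eq_iff] at he
        exact absurd he.1 (ne_of_lt (cval_lt_rho b hlt (a/3) (a'/3)))
      · rw [E0 a h0, E2 a' h2', vx_eq_iff] at he
        exact absurd he.1 (ne_of_lt (cval_lt_rho b hlt (a/3) (a'/3)))
    · rcases h3' with h0' | h1' | h2'
      · rw [E1 a h1, E0 a' h0', vx_eq_iff] at he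
        exact absurd he.1.symm (ne_of_lt (cval_lt_rho b hlt (a'/3) (a/3)))
      · rw [E1 a h1, E1 a' h1', vx_eq_iff] at he
        have := hrr _ _ he.1; omega
      · rw [E1 a h1, E2 a' h2', vx_eq_iff] at he
        have := hrr _ _ he.1; omega
    · rcases h3' with h0' | h1' | h2'
      · rw [E2 a h2, E0 a' h0', vx_eq_iff] at he
        exact absurd he.1.symm (ne_of_lt (cval_lt_rho b hlt (a'/3) (a/3)))
      · rw [E2 a h2, E1 a' h1', vx_eq_iff] at he
        have := hrr _ _ he.1; omega
      · rw [E2 a h2, E2 a' h2', vx_eq_iff] at he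
        have := hrr _ _ he.1; omega
  · intro k
    have h3 : k % 3 = 0 ∨ k % 3 = 1 ∨ k % 3 = 2 := by omega
    rcases h3 with h0 | h1 | h2
    · have e1 : (k+1) % 3 = 1 := by omega
      have e2 : (k+1) / 3 = k / 3 := by omega
      simp only [RRay, h0, e1, e2, reduceIte]
      exact adj_ladder' b (rho b hlt (k/3)).2 (rho_limit b hlt (k/3)) (k/3)
        (cval_lt_omega1 b hlt (k/3)) (rho_pin b hlt (k/3))
        (ne_of_lt (cval_lt_rho b hlt (k/3) (k/3)))
    · have e1 : (k+1) % 3 = 2 := by omega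
      have e2 : (k+1) / 3 = k / 3 := by omega
      simp only [RRay, h1, e1, e2, reduceIte]
      exact adj_vert (rho b hlt (k/3)).2 (k/3)
    · have e1 : (k+1) % 3 = 0 := by omega
      have e2 : (k+1) / 3 = k / 3 + 1 := by omega
      simp only [RRay, h2, e1, e2, reduceIte]
      exact (adj_ladder' b (rho b hlt (k/3)).2 (rho_limit b hlt (k/3)) (k/3 + 1)
        (cval_lt_omega1 b hlt (k/3 + 1)) (rho_pin' b hlt (k/3))
        (ne_of_lt (cval_lt_rho b hlt (k/3 + 1) (k/3)))).symm

/-- A bound for the ordinals appearing on the central ray. -/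
noncomputable def RBnd : Ordinal :=
  (exists_omega1_bound (Set.range (fun n => (rho b hlt n).1)) (Set.countable_range _)
    (by rintro o ⟨n, rfl⟩; exact (rho b hlt n).2)).choose

lemma RBnd_ltω : RBnd b hlt < omega1 :=
  (exists_omega1_bound (Set.range (fun n => (rho b hlt n).1)) (Set.countable_range _)
    (by rintro o ⟨n, rfl⟩; exact (rho b hlt n).2)).choose_spec.1

lemma RBnd_ge (n : ℕ) : (rho b hlt n).1 ≤ RBnd b hlt :=
  (exists_omega1_bound (Set.range (fun n => (rho b hlt n).1)) (Set.countable_range _)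
    (by rintro o ⟨n, rfl⟩; exact (rho b hlt n).2)).choose_spec.2 _ ⟨n, rfl⟩

lemma RRay_co_le (k : ℕ) : co (RRay b hlt k) ≤ RBnd b hlt := by
  rw [RRay]
  split
  · simp only [co_vx]
    exact le_trans (le_of_lt (cval_lt_rho b hlt (k/3) 0)) (RBnd_ge b hlt 0)
  · split <;> simp only [co_vx] <;> exact RBnd_ge b hlt (k/3)

end RRaySec


section Index

variable (b : Ordinal → ℕ → Ordinal)
variable (hmono : ∀ α : Ordinal, α < omega1 → Order.IsSuccLimit α → StrictMono (b α))
variable (hlt : ∀ α : Ordinal, α < omega1 → Order.IsSuccLimit α → ∀ n, b α n < α)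
variable (hconv : ∀ α : Ordinal, α < omega1 → Order.IsSuccLimit α → ∀ γ < α, ∃ n, γ ≤ b α n)

/-- Guarded bound function for the stations. -/
noncomputable def gBnd : Ordinal → Ordinal := fun σ =>
  if h : σ < omega1 then muBnd b hlt σ h else 0

lemma gBnd_ltω (σ : Ordinal) (h : σ < omega1) : gBnd b hlt σ < omega1 := by
  rw [gBnd, dif_pos h]
  exact muBnd_ltω b hlt σ h

lemma gBnd_eq (σ : Ordinal) (h : σ < omega1) : gBnd b hlt σ = muBnd b hlt σ h := by
  rw [gBnd, dif_pos h]

/-- The separated index set. -/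
def DSet : Set Ordinal :=
  {θ | θ < omega1 ∧ RBnd b hlt < θ ∧ ∀ σ, σ < θ → gBnd b hlt σ < θ}

lemma DSet_club : Club (DSet b hlt) := by
  constructor
  · intro α hα hlim hub
    refine ⟨hα, ?_, ?_⟩
    · obtain ⟨γ, hγ, h1, h2⟩ := hub 0 hlim.pos
      exact lt_trans hγ.2.1 h2
    · intro σ hσ
      obtain ⟨γ, hγ, h1, h2⟩ := hub σ hσ
      exact lt_trans (hγ.2.2 σ h1) h2
  · intro α₀ hα₀
    obtain ⟨α, h1, h2, h3, h4⟩ := exists_closure_point (gBnd b hlt)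
      (fun β hβ => gBnd_ltω b hlt β hβ) (max α₀ (RBnd b hlt))
      (max_lt hα₀ (RBnd_ltω b hlt))
    exact ⟨α, ⟨h2, lt_of_le_of_lt (le_max_right _ _) h1, fun σ hσ => h4 σ hσ⟩,
      lt_of_le_of_lt (le_max_left _ _) h1, h2⟩

lemma DSet_sep {θ θ' : Ordinal} (hθ : θ ∈ DSet b hlt) (hθ' : θ' ∈ DSet b hlt)
    (h : θ < θ') : muBnd b hlt θ hθ.1 < θ' := by
  have h1 := hθ'.2.2 θ h
  rwa [gBnd_eq b hlt θ hθ.1] at h1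

lemma DSet_not_countable : ¬ (DSet b hlt).Countable := by
  intro hc
  obtain ⟨B, hB, hBb⟩ := exists_omega1_bound _ hc (fun o ho => ho.1)
  obtain ⟨γ, hγ, h1, _⟩ := (DSet_club b hlt).2 B hB
  exact absurd (hBb γ hγ) (not_le.mpr h1)

end Index

section Index0

lemma exists_emb {b : Ordinal.{0} → ℕ → Ordinal.{0}}
    (hlt : ∀ α : Ordinal.{0}, α < omega1 → Order.IsSuccLimit α → ∀ n, b α n < α) :
    Nonempty ((Cardinal.aleph 1 : Cardinal.{0}).ord.ToType ↪ ↥(DSet b hlt)) := by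
  rw [← Cardinal.lift_mk_le']
  have h1 : (Cardinal.mk (Cardinal.aleph 1 : Cardinal.{0}).ord.ToType) = Cardinal.aleph 1 := by
    rw [Cardinal.mk_toType, Cardinal.card_ord]
  rw [h1]
  have h2 : (Cardinal.aleph 1 : Cardinal.{1}) ≤ Cardinal.mk ↥(DSet b hlt) := by
    rw [← Cardinal.succ_aleph0]
    apply Order.succ_le_of_lt
    by_contra h
    push_neg at h
    have h3 : (DSet b hlt).Countable := by
      rw [← Set.countable_coe_iff]
      rw [← Cardinal.mk_le_aleph0_iff]
      exact h
    exact DSet_not_countable b hlt h3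
  calc Cardinal.lift.{1} (Cardinal.aleph 1) = Cardinal.aleph 1 := by
        rw [Cardinal.lift_aleph]
        norm_num
    _ ≤ Cardinal.mk ↥(DSet b hlt) := h2
    _ = Cardinal.lift.{0} (Cardinal.mk ↥(DSet b hlt)) := (Cardinal.lift_id'.{0,1} _).symm

end Index0


end StarAux

/-- The graph `ω₁ # ℕ` contains an ℵ₁-star of rays all belonging to its unique
end; hence it satisfies Halin's Degree Conjecture for that end of degree ℵ₁. -/
theorem omegaGraph_has_aleph1_star (b : Ordinal → ℕ → Ordinal)
    (hmono : ∀ α : Ordinal, α < omega1 → Order.IsSuccLimit α → StrictMono (b α))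
    (hlt : ∀ α : Ordinal, α < omega1 → Order.IsSuccLimit α → ∀ n, b α n < α)
    (hconv : ∀ α : Ordinal, α < omega1 → Order.IsSuccLimit α → ∀ γ < α, ∃ n, γ ≤ b α n) :
    ∃ (ι : Type) (R : ℕ → Vtx) (leaf : ι → ℕ → Vtx),
      Cardinal.mk ι = Cardinal.aleph 1 ∧
      IsStarOfRays (omegaGraph b) R leaf ∧
      (∀ i, RayEquiv (omegaGraph b) (leaf i) R) := by
  classical
  open StarAux in
  obtain ⟨J⟩ := StarAux.exists_emb (b := b) hlt
  set θ : (Cardinal.aleph 1 : Cardinal.{0}).ord.ToType → Ordinal := fun i => (J i).1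
    with hθdef
  have hθω : ∀ i, θ i < omega1 := fun i => (J i).2.1
  have hθD : ∀ i, θ i ∈ StarAux.DSet b hlt := fun i => (J i).2
  have hθinj : Function.Injective θ := by
    intro i j h
    exact J.injective (Subtype.ext h)
  set leaf : (Cardinal.aleph 1 : Cardinal.{0}).ord.ToType → ℕ → Vtx :=
    fun i => StarAux.leafRay b hmono hlt hconv (θ i) (hθω i) with hleafdef
  -- the tooth edge
  have tooth_adj : ∀ i n, (omegaGraph b).Adj
      (StarAux.vx (StarAux.mu b hlt (θ i) (hθω i) n).1 (StarAux.mu b hlt (θ i) (hθω i) n).2 n)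
      (StarAux.vx (StarAux.cval b hlt n) (StarAux.cval_lt_omega1 b hlt n) n) := by
    intro i n
    exact (StarAux.adj_ladder' b (StarAux.mu b hlt (θ i) (hθω i) n).2
      (StarAux.mu_limit b hlt (θ i) (hθω i) n) n (StarAux.cval_lt_omega1 b hlt n)
      (StarAux.mu_pin b hlt (θ i) (hθω i) n)
      (ne_of_lt (StarAux.cval_lt_mem b hlt (StarAux.mu_mem b hlt (θ i) (hθω i) n)))).symm
  -- range bounds for leaves
  have leafco : ∀ i n, θ i < StarAux.co (leaf i n) ∧
      StarAux.co (leaf i n) ≤ StarAux.muBnd b hlt (θ i) (hθω i) := by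
    intro i n
    exact StarAux.leafRay_range b hmono hlt hconv (θ i) (hθω i) n
  -- leaves of distinct indices have disjoint co-intervals
  have key : ∀ i j, i ≠ j → ∀ n m, leaf i n ≠ leaf j m := by
    intro i j hij n m he
    have h1 := leafco i n
    have h2 := leafco j m
    rw [he] at h1
    have hne : θ i ≠ θ j := fun h => hij (hθinj h)
    rcases lt_or_gt_of_ne hne with h | h
    · have hsep := StarAux.DSet_sep b hlt (hθD i) (hθD j) h
      have := lt_trans (lt_of_le_of_lt h1.2 hsep) h2.1
      exact absurd this (lt_irrefl _)
    · have hsep := StarAux.DSet_sep b hlt (hθD j) (hθD i) h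
      have := lt_trans (lt_of_le_of_lt h2.2 hsep) h1.1
      exact absurd this (lt_irrefl _)
  refine ⟨(Cardinal.aleph 1 : Cardinal.{0}).ord.ToType, StarAux.RRay b hlt, leaf, ?_, ?_, ?_⟩
  · rw [Cardinal.mk_toType, Cardinal.card_ord]
  · refine ⟨StarAux.RRay_isRay b hlt,
      fun i => StarAux.leafRay_isRay b hmono hlt hconv (θ i) (hθω i), ?_, ?_, ?_⟩
    · -- leaves pairwise disjoint
      intro i j hij
      rw [Set.disjoint_left]
      rintro x ⟨n, rfl⟩ ⟨m, hm⟩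
      exact key i j hij n m hm.symm
    · -- leaf disjoint from R
      intro i
      rw [Set.disjoint_left]
      rintro x ⟨n, rfl⟩ ⟨k, hk⟩
      have h1 := (leafco i n).1
      have h2 : StarAux.co (leaf i n) ≤ StarAux.RBnd b hlt := by
        rw [← hk]
        exact StarAux.RRay_co_le b hlt k
      have h3 := (hθD i).2.1
      exact absurd (lt_trans h3 h1) (not_lt.mpr h2)
    · -- the teeth
      set tooth : (Cardinal.aleph 1 : Cardinal.{0}).ord.ToType → ℕ → ℕ → Vtx :=
        fun i n k =>
          if k = 0 then StarAux.vx (StarAux.mu b hlt (θ i) (hθω i) n).1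
              (StarAux.mu b hlt (θ i) (hθω i) n).2 n
            else StarAux.vx (StarAux.cval b hlt n) (StarAux.cval_lt_omega1 b hlt n) n
        with htooth
      have tooth0 : ∀ i n, tooth i n 0 = StarAux.vx (StarAux.mu b hlt (θ i) (hθω i) n).1
          (StarAux.mu b hlt (θ i) (hθω i) n).2 n := by
        intro i n; rw [htooth]; simp
      have tooth1 : ∀ i n k, k ≠ 0 → tooth i n k =
          StarAux.vx (StarAux.cval b hlt n) (StarAux.cval_lt_omega1 b hlt n) n := by
        intro i n k hk; rw [htooth]; simp [hk]
      have tooth_lv : ∀ i n k, StarAux.lv (tooth i n k) = n := by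
        intro i n k
        rcases Nat.eq_zero_or_pos k with rfl | h
        · rw [tooth0]; simp
        · rw [tooth1 i n k (by omega)]; simp
      refine ⟨fun _ _ => 1, tooth, ?_, ?_, ?_, ?_, ?_⟩
      · intro i n
        exact StarAux.two_ex (tooth_adj i n)
      · intro i n
        refine ⟨StarAux.cum (StarAux.chL b hmono hlt hconv (θ i) (hθω i)) n, ?_⟩
        rw [tooth0]
        exact StarAux.leafRay_start b hmono hlt hconv (θ i) (hθω i) n
      · intro i n
        refine ⟨3 * n, ?_⟩
        rw [tooth1 i n 1 one_ne_zero]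
        exact StarAux.RRay_hub b hlt n
      · -- same-family teeth disjoint
        intro i m n hmn
        rw [Set.disjoint_left]
        rintro x hx hy
        obtain ⟨k, hk, rfl⟩ := hx
        obtain ⟨k', hk', he⟩ := hy
        have h1 := tooth_lv i m k
        have h2 := tooth_lv i n k'
        rw [he] at h2
        rw [h1] at h2
        exact hmn h2
      · -- cross-family teeth meet only in R
        intro i j hij m n x hx hy
        obtain ⟨k, hk, rfl⟩ := hx
        obtain ⟨k', hk', he⟩ := hy
        simp only [Set.mem_Iic] at hk hk'
        rcases Nat.eq_zero_or_pos k with rfl | hk0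
        · rcases Nat.eq_zero_or_pos k' with rfl | hk'0
          · exfalso
            rw [tooth0, tooth0] at he
            have h1 : n = m := by
              have := congrArg StarAux.lv he
              simpa using this
            subst h1
            have e1 := StarAux.leafRay_start b hmono hlt hconv (θ i) (hθω i) n
            have e2 := StarAux.leafRay_start b hmono hlt hconv (θ j) (hθω j) n
            exact key j i (fun h => hij h.symm)
              (StarAux.cum (StarAux.chL b hmono hlt hconv (θ j) (hθω j)) n)
              (StarAux.cum (StarAux.chL b hmono hlt hconv (θ i) (hθω i)) n)
              (by simp only [hleafdef]; rw [e2, e1]; exact he)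
          · rw [tooth1 j n k' (by omega)] at he
            refine ⟨3 * n, ?_⟩
            rw [StarAux.RRay_hub b hlt n, he]
        · rw [tooth1 i m k (by omega)]
          exact ⟨3 * m, StarAux.RRay_hub b hlt m⟩
  · -- RayEquiv
    intro i S hS
    have hfin1 : {n : ℕ | StarAux.vx (StarAux.mu b hlt (θ i) (hθω i) n).1
        (StarAux.mu b hlt (θ i) (hθω i) n).2 n ∈ S}.Finite := by
      apply Set.Finite.preimage ?_ hS
      intro a _ a' _ h
      have := congrArg StarAux.lv h
      simpa using this
    have hfin2 : {n : ℕ | StarAux.vx (StarAux.cval b hlt n)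
        (StarAux.cval_lt_omega1 b hlt n) n ∈ S}.Finite := by
      apply Set.Finite.preimage ?_ hS
      intro a _ a' _ h
      have := congrArg StarAux.lv h
      simpa using this
    obtain ⟨B, hB⟩ := (hfin1.union hfin2).bddAbove
    set N := B + 1 with hN
    have hN1 : StarAux.vx (StarAux.mu b hlt (θ i) (hθω i) N).1
        (StarAux.mu b hlt (θ i) (hθω i) N).2 N ∉ S := by
      intro hmem
      have := hB (Set.mem_union_left _ hmem)
      omega
    have hN2 : StarAux.vx (StarAux.cval b hlt N)
        (StarAux.cval_lt_omega1 b hlt N) N ∉ S := by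
      intro hmem
      have := hB (Set.mem_union_right _ hmem)
      omega
    have e1 := StarAux.leafRay_start b hmono hlt hconv (θ i) (hθω i) N
    have hi' : leaf i (StarAux.cum (StarAux.chL b hmono hlt hconv (θ i) (hθω i)) N) ∈ Sᶜ := by
      simp only [hleafdef]
      rw [e1]
      exact hN1
    have hj' : StarAux.RRay b hlt (3 * N) ∈ Sᶜ := by
      rw [StarAux.RRay_hub b hlt N]
      exact hN2
    refine ⟨StarAux.cum (StarAux.chL b hmono hlt hconv (θ i) (hθω i)) N, 3 * N, hi', hj', ?_⟩
    apply SimpleGraph.Adj.reachable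
    have hadj : (omegaGraph b).Adj
        (leaf i (StarAux.cum (StarAux.chL b hmono hlt hconv (θ i) (hθω i)) N))
        (StarAux.RRay b hlt (3 * N)) := by
      simp only [hleafdef]
      rw [e1, StarAux.RRay_hub b hlt N]
      exact tooth_adj i N
    exact hadj
end

section
/- Let T be an order tree, G a T-graph. Then the following are equivalent: (1) for every limit ordinal σ, all connected components of G − T^{≤σ} have finite neighbourhoods; (2) for every ordinal σ, all components of G − T^{≤σ} have finite neighbourhoods; (3) for every successor node t ∈ T, the up-closure ⌊t⌋ = {s : s ≥ t} has finite neighbourhood in G. -/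
/-- An order tree: a partial order with a least element (root), whose strict
down-sets are chains and whose strict order is well-founded (hence every
down-set is well-ordered). -/
def IsOrderTree (T : Type*) [PartialOrder T] : Prop :=
  (∃ r : T, ∀ t, r ≤ t) ∧ (∀ t : T, IsChain (· ≤ ·) {s | s < t}) ∧ WellFoundedLT T

/-- `ht` is the height (rank) function of the tree: the height of a node is the
supremum of the successors of the heights of the nodes strictly below it; for an
order tree this is the order type of its strict down-set. -/
def IsHeightFun {T : Type*} [PartialOrder T] (ht : T → Ordinal) : Prop :=
  ∀ t, ht t = sSup ((fun s => ht s + 1) '' {s | s < t})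

/-- An `ω₁`-tree: height `ω₁` and all levels countable. -/
def IsOmegaOneTree {T : Type*} [PartialOrder T] (ht : T → Ordinal) : Prop :=
  (∀ t, ht t < omega1) ∧ (∀ o < omega1, ∃ t, ht t = o) ∧
  (∀ o : Ordinal, {t | ht t = o}.Countable)

/-- An Aronszajn tree has no uncountable branch (chain). -/
def NoUncountableBranch (T : Type*) [PartialOrder T] : Prop :=
  ∀ B : Set T, IsChain (· ≤ ·) B → B.Countable

/-- A tree is special if it is a countable union of antichains. -/
def IsSpecialTree (T : Type*) [PartialOrder T] : Prop :=
  ∃ A : ℕ → Set T, (∀ n, IsAntichain (· ≤ ·) (A n)) ∧ (⋃ n, A n) = Set.univ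

/-- A successor node: its strict down-set has a maximum. -/
def IsSuccNode {T : Type*} [PartialOrder T] (t : T) : Prop :=
  ∃ m, m < t ∧ ∀ s, s < t → s ≤ m

/-- The neighbourhood of a vertex set `X` in `G`: vertices outside `X` adjacent
to some vertex of `X`. -/
def nbhd {V : Type*} (G : SimpleGraph V) (X : Set V) : Set V :=
  {v | v ∉ X ∧ ∃ x ∈ X, G.Adj v x}

/-- `s` lies in the component of `t` in `G − T^{≤σ}`: there is a walk from `t`
to `s` all of whose vertices have height `> σ`. -/
def SameCompAbove {T : Type*} [PartialOrder T] (G : SimpleGraph T)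
    (ht : T → Ordinal) (σ : Ordinal) (t s : T) : Prop :=
  ∃ w : G.Walk t s, ∀ x ∈ w.support, σ < ht x

section Aux

open SimpleGraph

variable {T : Type} [PartialOrder T] {ht : T → Ordinal} {G : SimpleGraph T}

lemma ht_bdd (ht : T → Ordinal) (t : T) :
    BddAbove ((fun s => ht s + 1) '' {s | s < t}) := by
  rw [Set.image_eq_range]
  exact Ordinal.bddAbove_range _

lemma ht_lt (hht : IsHeightFun ht) {s t : T} (h : s < t) : ht s < ht t := by
  have h1 : ht s + 1 ≤ ht t := by
    rw [hht t]
    exact le_csSup (ht_bdd ht t) ⟨s, h, rfl⟩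
  have h2 : ht s < ht s + 1 := by
    rw [Ordinal.add_one_eq_succ]; exact Order.lt_succ _
  exact lt_of_lt_of_le h2 h1

lemma ht_le (hht : IsHeightFun ht) {s t : T} (h : s ≤ t) : ht s ≤ ht t := by
  rcases h.lt_or_eq with h | h
  · exact (ht_lt hht h).le
  · rw [h]

lemma ht_exists_ge (hht : IsHeightFun ht) {σ : Ordinal} {t : T} (h : σ < ht t) :
    ∃ s, s < t ∧ σ ≤ ht s := by
  by_contra hc
  push_neg at hc
  rcases Set.eq_empty_or_nonempty {s | s < t} with he | ⟨s0, hs0⟩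
  · have : ht t = 0 := by rw [hht t, he, Set.image_empty, csSup_empty]; rfl
    rw [this] at h
    exact absurd h (not_lt.mpr (zero_le (a := σ)))
  · have : ht t ≤ σ := by
      rw [hht t]
      refine csSup_le ⟨_, ⟨s0, hs0, rfl⟩⟩ ?_
      rintro x ⟨s, hs, rfl⟩
      show ht s + 1 ≤ σ
      rw [Ordinal.add_one_eq_succ, Order.succ_le_iff]
      exact hc s hs
    exact absurd h (not_lt.mpr this)

lemma sca_refl {σ : Ordinal} {t : T} (h : σ < ht t) : SameCompAbove G ht σ t t :=
  ⟨Walk.nil, by intro x hx; simp at hx; subst hx; exact h⟩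

lemma sca_symm {σ : Ordinal} {t s : T} (h : SameCompAbove G ht σ t s) :
    SameCompAbove G ht σ s t := by
  obtain ⟨w, hw⟩ := h
  exact ⟨w.reverse, fun x hx => hw x (by simpa [Walk.support_reverse] using hx)⟩

lemma sca_trans {σ : Ordinal} {a b c : T} (h1 : SameCompAbove G ht σ a b)
    (h2 : SameCompAbove G ht σ b c) : SameCompAbove G ht σ a c := by
  obtain ⟨w1, hw1⟩ := h1
  obtain ⟨w2, hw2⟩ := h2
  refine ⟨w1.append w2, fun x hx => ?_⟩
  rcases (Walk.mem_support_append_iff w1 w2).mp hx with h | h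
  · exact hw1 x h
  · exact hw2 x h

lemma sca_adj {σ : Ordinal} {t s u : T} (h : SameCompAbove G ht σ t s)
    (ha : G.Adj s u) (hu : σ < ht u) : SameCompAbove G ht σ t u := by
  refine sca_trans h ⟨Walk.cons ha Walk.nil, fun x hx => ?_⟩
  simp only [Walk.support_cons, Walk.support_nil, List.mem_cons,
    List.mem_singleton] at hx
  obtain ⟨w, hw⟩ := h
  rcases hx with rfl | rfl | hx
  · exact hw x w.end_mem_support
  · exact hu
  · simp at hx

lemma sca_of_le (htree : IsOrderTree T) (hht : IsHeightFun ht)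
    (hlowcof : ∀ t s : T, s < t → ∃ u, G.Adj u t ∧ u < t ∧ s ≤ u)
    {σ : Ordinal} {t : T} (hσ : σ < ht t) :
    ∀ s, t ≤ s → SameCompAbove G ht σ t s := by
  intro s
  induction s using htree.2.2.wf.induction with
  | _ s IH =>
    intro hts
    rcases hts.lt_or_eq with hlt | rfl
    · obtain ⟨u, hadj, hus, htu⟩ := hlowcof s t hlt
      have hscau : SameCompAbove G ht σ t u := IH u hus htu
      have hσs : σ < ht s := lt_of_lt_of_le hσ (ht_le hht hlt.le)
      exact sca_adj hscau hadj hσs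
    · exact sca_refl hσ

lemma walk_ge (htree : IsOrderTree T) (hht : IsHeightFun ht)
    (hcomp : ∀ a b : T, G.Adj a b → a < b ∨ b < a)
    {σ : Ordinal} {m : T} (Hlow : ∀ b, b < m → ht b ≤ σ) :
    ∀ {a s : T} (w : G.Walk a s), m ≤ a → (∀ x ∈ w.support, σ < ht x) → m ≤ s := by
  intro a s w
  induction w with
  | nil => intro h _; exact h
  | @cons a b s h p IH =>
    intro hma hsup
    have hb : σ < ht b := hsup b (by simp [Walk.support_cons, p.start_mem_support])
    have hmb : m ≤ b := by
      rcases hcomp a b h with hab | hba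
      · exact hma.trans hab.le
      · rcases hma.lt_or_eq with hma' | rfl
        · rcases eq_or_ne b m with rfl | hne
          · exact le_rfl
          · rcases htree.2.1 a hba hma' hne with hbm | hmb
            · rcases hbm.lt_or_eq with hbm | rfl
              · exact absurd hb (not_lt.mpr (Hlow b hbm))
              · exact le_rfl
            · exact hmb
        · exact absurd hb (not_lt.mpr (Hlow b hba))
    exact IH hmb (fun x hx => hsup x (by simp [Walk.support_cons, hx]))

lemma component_eq (htree : IsOrderTree T) (hht : IsHeightFun ht)
    (hcomp : ∀ a b : T, G.Adj a b → a < b ∨ b < a)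
    (hlowcof : ∀ t s : T, s < t → ∃ u, G.Adj u t ∧ u < t ∧ s ≤ u)
    {σ : Ordinal} {t : T} (hσ : σ < ht t) :
    ∃ m, IsSuccNode m ∧ ∀ s, SameCompAbove G ht σ t s ↔ m ≤ s := by
  classical
  set S : Set T := {u | u ≤ t ∧ SameCompAbove G ht σ t u} with hS
  have hSne : S.Nonempty := ⟨t, le_rfl, sca_refl hσ⟩
  set m : T := htree.2.2.wf.min S hSne with hm
  have hmS : m ∈ S := htree.2.2.wf.min_mem S hSne
  have hmin : ∀ v ∈ S, ¬v < m := fun v hv => htree.2.2.wf.not_lt_min S hv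
  have hσm : σ < ht m := by
    obtain ⟨w, hw⟩ := hmS.2
    exact hw m w.end_mem_support
  have hnolow : ∀ v, SameCompAbove G ht σ t v → ¬v < m := by
    intro v hv hvm
    exact hmin v ⟨(hvm.trans_le hmS.1).le, hv⟩ hvm
  have Hlow : ∀ b, b < m → ht b ≤ σ := by
    intro b hb
    by_contra hc
    push_neg at hc
    obtain ⟨u, hadj, hum, hbu⟩ := hlowcof m b hb
    have hσu : σ < ht u := lt_of_lt_of_le hc (ht_le hht hbu)
    exact hnolow u (sca_adj hmS.2 hadj.symm hσu) hum
  obtain ⟨s0, hs0m, hσs0⟩ := ht_exists_ge hht hσm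
  have hsucc : IsSuccNode m := by
    refine ⟨s0, hs0m, fun s hs => ?_⟩
    rcases eq_or_ne s s0 with rfl | hne
    · exact le_rfl
    · rcases htree.2.1 m hs hs0m hne with h | h
      · exact h
      · rcases h.lt_or_eq with h | rfl
        · exact absurd ((ht_lt hht h).trans_le (Hlow s hs)) (not_lt.mpr hσs0)
        · exact le_rfl
  refine ⟨m, hsucc, fun s => ⟨fun hts => ?_, fun hms => ?_⟩⟩
  · obtain ⟨w, hw⟩ := sca_trans (sca_symm hmS.2) hts
    exact walk_ge htree hht hcomp Hlow w le_rfl hw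
  · exact sca_trans hmS.2 (sca_of_le htree hht hlowcof hσm s hms)

end Aux

/-- For a `T`-graph `G` the following are equivalent: (1) for every limit
ordinal `σ` all components of `G − T^{≤σ}` have finite neighbourhoods; (2) the
same for every ordinal `σ`; (3) every up-closure `⌊t⌋` of a successor node `t`
has finite neighbourhood. -/
theorem finite_adhesion_tfae {T : Type} [PartialOrder T]
    (ht : T → Ordinal) (htree : IsOrderTree T) (hht : IsHeightFun ht)
    (G : SimpleGraph T)
    (hcomp : ∀ a b : T, G.Adj a b → a < b ∨ b < a)
    (hlowcof : ∀ t s : T, s < t → ∃ u, G.Adj u t ∧ u < t ∧ s ≤ u) :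
    ((∀ σ : Ordinal, Order.IsSuccLimit σ → ∀ t : T, σ < ht t →
        (nbhd G {s | SameCompAbove G ht σ t s}).Finite) ↔
      (∀ σ : Ordinal, ∀ t : T, σ < ht t →
        (nbhd G {s | SameCompAbove G ht σ t s}).Finite)) ∧
    ((∀ σ : Ordinal, ∀ t : T, σ < ht t →
        (nbhd G {s | SameCompAbove G ht σ t s}).Finite) ↔
      (∀ t : T, IsSuccNode t → (nbhd G {s | t ≤ s}).Finite)) := by
  have h2_of_h3 : (∀ t : T, IsSuccNode t → (nbhd G {s | t ≤ s}).Finite) →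
      ∀ σ : Ordinal, ∀ t : T, σ < ht t →
        (nbhd G {s | SameCompAbove G ht σ t s}).Finite := by
    intro h3 σ t hσ
    obtain ⟨m, hm, hiff⟩ := component_eq htree hht hcomp hlowcof hσ
    have heq : {s | SameCompAbove G ht σ t s} = {s | m ≤ s} := Set.ext fun s => hiff s
    rw [heq]
    exact h3 m hm
  have h3_of_h2 : (∀ σ : Ordinal, ∀ t : T, σ < ht t →
      (nbhd G {s | SameCompAbove G ht σ t s}).Finite) →
      ∀ t : T, IsSuccNode t → (nbhd G {s | t ≤ s}).Finite := by
    intro h2 t htsucc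
    obtain ⟨p, hp, hpmax⟩ := htsucc
    have hσ : ht p < ht t := ht_lt hht hp
    obtain ⟨m, hm, hiff⟩ := component_eq htree hht hcomp hlowcof hσ
    have hmt : m ≤ t := (hiff t).mp (sca_refl hσ)
    have htm : m = t := by
      rcases hmt.lt_or_eq with hlt | h
      · exfalso
        obtain ⟨w, hw⟩ := (hiff m).mpr le_rfl
        have hhm : ht p < ht m := hw m w.end_mem_support
        exact absurd (ht_le hht (hpmax m hlt)) (not_le.mpr hhm)
      · exact h
    have heq : {s | t ≤ s} = {s | SameCompAbove G ht (ht p) t s} :=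
      Set.ext fun s => by rw [Set.mem_setOf_eq, Set.mem_setOf_eq, hiff s, htm]
    rw [heq]
    exact h2 _ t hσ
  have h3_of_h1 : (∀ σ : Ordinal, Order.IsSuccLimit σ → ∀ t : T, σ < ht t →
      (nbhd G {s | SameCompAbove G ht σ t s}).Finite) →
      ∀ t : T, IsSuccNode t → (nbhd G {s | t ≤ s}).Finite := by
    intro h1 t htsucc
    obtain ⟨p, hp, hpmax⟩ := htsucc
    by_contra hinf
    set N := nbhd G {s | t ≤ s} with hNdef
    have hNsub : ∀ v ∈ N, v < t := by
      rintro v ⟨hvnot, x, htx, hadj⟩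
      have hne : v ≠ t := fun h => hvnot (h ▸ le_rfl)
      rcases hcomp v x hadj with hvx | hxv
      · rcases (htx : t ≤ x).lt_or_eq with htx' | rfl
        · rcases htree.2.1 x hvx htx' hne with h | h
          · exact h.lt_of_ne hne
          · exact absurd h hvnot
        · exact hvx
      · exact absurd ((htx : t ≤ x).trans hxv.le) hvnot
    have hinf' : N.Infinite := hinf
    have hinj : ∀ v ∈ N, ∀ w ∈ N, ht v = ht w → v = w := by
      intro v hv w hw hvw
      by_contra hne
      rcases htree.2.1 t (hNsub v hv) (hNsub w hw) hne with h | h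
      · exact absurd hvw (ne_of_lt (ht_lt hht (h.lt_of_ne hne)))
      · exact absurd hvw.symm (ne_of_lt (ht_lt hht (h.lt_of_ne (Ne.symm hne))))
    set S : Set Ordinal := {o | {v ∈ N | ht v < o}.Infinite} with hSdef
    have httS : ht t ∈ S :=
      hinf'.mono (fun v hv => ⟨hv, ht_lt hht (hNsub v hv)⟩)
    have hSne : S.Nonempty := ⟨ht t, httS⟩
    set lam : Ordinal := Ordinal.lt_wf.min S hSne with hlamdef
    have hlamS : lam ∈ S := Ordinal.lt_wf.min_mem S hSne
    have hlam_le : lam ≤ ht t := not_lt.mp (Ordinal.lt_wf.not_lt_min S httS)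
    have hmono : ∀ o, Order.succ o = lam → o ∈ S := by
      intro o ho
      have hsplit : {v ∈ N | ht v < lam} ⊆ {v ∈ N | ht v < o} ∪ {v ∈ N | ht v = o} := by
        rintro v ⟨hv, hvo⟩
        rw [← ho, Order.lt_succ_iff] at hvo
        rcases hvo.lt_or_eq with h | h
        · exact Or.inl ⟨hv, h⟩
        · exact Or.inr ⟨hv, h⟩
      by_contra hfin
      rw [hSdef, Set.mem_setOf_eq, Set.not_infinite] at hfin
      have hfin2 : {v ∈ N | ht v = o}.Finite := by
        apply Set.Subsingleton.finite
        rintro v ⟨hv, hvo⟩ w ⟨hw, hwo⟩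
        exact hinj v hv w hw (hvo.trans hwo.symm)
      exact hlamS ((hfin.union hfin2).subset hsplit)
    have hlim : Order.IsSuccLimit lam := by
      rw [Ordinal.isSuccLimit_iff]
      refine ⟨?_, Order.isSuccPrelimit_of_succ_lt ?_⟩
      · intro h0
        apply hlamS
        apply Set.Finite.subset (Set.finite_empty)
        rintro v ⟨_, hv⟩
        rw [h0] at hv
        exact absurd hv (not_lt.mpr (zero_le))
      · intro o holt
        rcases (Order.succ_le_of_lt holt).lt_or_eq with h | h
        · exact h
        · exact absurd holt (Ordinal.lt_wf.not_lt_min S (hmono o h))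
    have hhtt : ht t = ht p + 1 := by
      rw [hht t]
      apply le_antisymm
      · refine csSup_le ⟨_, ⟨p, hp, rfl⟩⟩ ?_
        rintro x ⟨s, hs, rfl⟩
        show ht s + 1 ≤ ht p + 1
        exact add_le_add_left (ht_le hht (hpmax s hs)) 1
      · exact le_csSup (ht_bdd ht t) ⟨p, hp, rfl⟩
    have hlamlt : lam < ht t := by
      rcases hlam_le.lt_or_eq with h | h
      · exact h
      · exfalso
        have hlt : Order.succ (ht p) < lam :=
          hlim.succ_lt (by rw [h, hhtt, Ordinal.add_one_eq_succ]; exact Order.lt_succ _)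
        rw [h, hhtt, Ordinal.add_one_eq_succ] at hlt
        exact lt_irrefl _ hlt
    have hfin := h1 lam hlim t hlamlt
    apply hlamS
    apply hfin.subset
    rintro v ⟨hvN, hvlt⟩
    obtain ⟨hvnot, x, htx, hadj⟩ := hvN
    refine ⟨?_, x, sca_of_le htree hht hlowcof hlamlt x htx, hadj⟩
    rintro ⟨w, hw⟩
    exact absurd (hw v w.end_mem_support) (not_lt.mpr hvlt.le)
  exact ⟨⟨fun h1 => h2_of_h3 (h3_of_h1 h1), fun h2 σ _ t hσ => h2 σ t hσ⟩,
    ⟨h3_of_h2, h2_of_h3⟩⟩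
end
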